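/- arXiv:2412.13127 — 4 statements merged into one kernel-verified Lean document; each statement's English description precedes it below -/
import Mathlib

section
/- Let d ≥ 1 be an integer and let G be a graph on vertex set [n] with n > d that is closed in the d-rigidity matroid. Suppose A ⊆ [n] induces a clique in G and v ∉ A is a vertex adjacent in G to at least d vertices of A. Then A ∪ {v} also induces a clique in G. -/
/-- An embedding is generic if its `d·n` coordinates are algebraically independent over `ℚ`. -/
def IsGeneric {n d : ℕ} (pt : Fin n → Fin d → ℝ) : Prop :=
  AlgebraicIndependent ℚ fun vi : Fin n × Fin d => pt vi.1 vi.2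

/-- The rigidity-matrix row of a pair `e`: at the coordinates of a vertex `v ∈ e` it holds
`𝐩(v) − 𝐩(u)` where `u` is the other element of `e`, and it vanishes elsewhere. -/
noncomputable def rRow {n d : ℕ} (pt : Fin n → Fin d → ℝ) (e : Sym2 (Fin n)) :
    Fin n × Fin d → ℝ :=
  fun vi => if h : vi.1 ∈ e then pt vi.1 vi.2 - pt (Sym2.Mem.other h) vi.2 else 0

/-- A graph on `[n]` (with `n > d`) is `d`-rigid if for every generic embedding the span of the
rows of its edges has dimension `d·n − (d+1 choose 2)`. -/
def IsRigid (n d : ℕ) (G : SimpleGraph (Fin n)) : Prop :=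
  ∀ pt : Fin n → Fin d → ℝ, IsGeneric pt →
    Module.finrank ℝ ↥(Submodule.span ℝ (rRow pt '' G.edgeSet)) = d * n - (d + 1).choose 2

/-- The `d`-rigidity closure `C_d(G)` with respect to an embedding `pt`: the graph whose edges
are the pairs `f` with `r_f` in the span of the rows of the edges of `G`. -/
noncomputable def rigidityClosure (n d : ℕ) (pt : Fin n → Fin d → ℝ)
    (G : SimpleGraph (Fin n)) : SimpleGraph (Fin n) where
  Adj x y := x ≠ y ∧ rRow pt s(x, y) ∈ Submodule.span ℝ (rRow pt '' G.edgeSet)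
  symm := ⟨fun x y h => ⟨h.1.symm, by rw [Sym2.eq_swap]; exact h.2⟩⟩
  loopless := ⟨fun x h => h.1 rfl⟩

/-- `G` is closed in the `d`-rigidity matroid: `C_d(G) = G` for every generic embedding. -/
def RigidityClosed (n d : ℕ) (G : SimpleGraph (Fin n)) : Prop :=
  ∀ pt : Fin n → Fin d → ℝ, IsGeneric pt → rigidityClosure n d pt G = G


instance mvPolyCountable {σ R : Type*} [Countable σ] [CommSemiring R] [Countable R] :
    Countable (MvPolynomial σ R) :=
  have : Countable ((σ →₀ ℕ) →₀ R) := inferInstance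
  AddMonoidAlgebra.coeff_injective.countable

lemma exists_algIndep (m : ℕ) : ∃ x : Fin m → ℝ, AlgebraicIndependent ℚ x := by
  induction m with
  | zero => exact ⟨fun i => 0, algebraicIndependent_empty_type_iff.2 (algebraMap ℚ ℝ).injective⟩
  | succ m ih =>
    obtain ⟨x, hx⟩ := ih
    set R := Algebra.adjoin ℚ (Set.range x) with hR
    have hcount : Countable R := by
      have h1 : (R : Set ℝ) = Set.range (MvPolynomial.aeval x : MvPolynomial (Fin m) ℚ →ₐ[ℚ] ℝ) := by
        rw [hR, Algebra.adjoin_range_eq_range_aeval]; rfl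
      have : (R : Set ℝ).Countable := h1 ▸ Set.countable_range _
      exact this.to_subtype
    have : Module.IsTorsionFree R ℝ := inferInstance
    have halg : {a : ℝ | IsAlgebraic R a}.Countable := Algebraic.countable R ℝ
    obtain ⟨a, ha⟩ : ∃ a : ℝ, Transcendental R a := by
      by_contra h
      push_neg at h
      simp only [Transcendental, not_not] at h
      have : (Set.univ : Set ℝ).Countable := by
        convert halg using 1
        ext z; simp [h z]
      exact Cardinal.not_countable_real (by simpa using this)
    have h2 := (hx.option_iff_transcendental a).2 ha
    exact ⟨fun i => (finSuccEquiv m i).elim a x, h2.comp _ (finSuccEquiv m).injective⟩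

open Matrix MvPolynomial in
lemma generic_linIndep {n d : ℕ} {pt : Fin n → Fin d → ℝ} (hpt : IsGeneric pt)
    (f : Fin (d+1) → Fin n) (hf : Function.Injective f) :
    LinearIndependent ℝ (fun i : Fin (d+1) => (Fin.cons 1 (pt (f i)) : Fin (d+1) → ℝ)) := by
  set M : Matrix (Fin (d+1)) (Fin (d+1)) ℝ := fun i => Fin.cons 1 (pt (f i)) with hM
  rw [show LinearIndependent ℝ (fun i : Fin (d+1) => (Fin.cons 1 (pt (f i)) : Fin (d+1) → ℝ)) = LinearIndependent ℝ M.row from rfl]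
  rw [linearIndependent_rows_iff_isUnit, Matrix.isUnit_iff_isUnit_det, isUnit_iff_ne_zero]
  set N : Matrix (Fin (d+1)) (Fin (d+1)) (MvPolynomial (Fin n × Fin d) ℚ) :=
    fun i => Fin.cons 1 (fun j' => X (f i, j')) with hN
  have haev : M = N.map (aeval fun vi : Fin n × Fin d => pt vi.1 vi.2) := by
    ext i j
    refine Fin.cases ?_ (fun j' => ?_) j <;> simp [hM, hN, Matrix.map]
  have hdet : M.det = (aeval fun vi : Fin n × Fin d => pt vi.1 vi.2) N.det := by
    rw [haev, AlgHom.map_det (aeval fun vi : Fin n × Fin d => pt vi.1 vi.2) N]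
    rfl
  have hNdet : N.det ≠ 0 := by
    intro h0
    have heval := congrArg (aeval fun vi : Fin n × Fin d =>
      (if vi.1 = f (Fin.succ vi.2) then (1:ℚ) else 0)) h0
    rw [map_zero, AlgHom.map_det] at heval
    set P := (aeval fun vi : Fin n × Fin d => (if vi.1 = f (Fin.succ vi.2) then (1:ℚ) else 0)).mapMatrix N with hPdef
    have hP : P.det = 1 := by
      have htri : P.BlockTriangular OrderDual.toDual := by
        intro i j hij
        change (i : Fin (d+1)) < j at hij
        have hj : j ≠ 0 := fun h => by simp [h] at hij
        obtain ⟨j', rfl⟩ := Fin.exists_succ_eq.2 hj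
        have : i ≠ Fin.succ j' := fun h => lt_irrefl _ (h ▸ hij)
        simp [P, N, Matrix.map, hf.ne this]
      rw [Matrix.det_of_lowerTriangular P htri]
      apply Finset.prod_eq_one
      intro i _
      refine Fin.cases ?_ (fun i' => ?_) i <;> simp [P, N, Matrix.map]
    rw [hP] at heval
    exact one_ne_zero heval
  rw [hdet]
  intro h
  apply hNdet
  apply algebraicIndependent_iff_injective_aeval.1 hpt
  rw [map_zero]
  exact h

lemma rRow_apply {n d : ℕ} (pt : Fin n → Fin d → ℝ) (x y u : Fin n) (c : Fin d) :
    rRow pt s(x, y) (u, c) =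
      (if u = x then pt x c - pt y c else 0) + (if u = y then pt y c - pt x c else 0) := by
  unfold rRow
  by_cases hx : u = x <;> by_cases hy : u = y
  · subst hx; rw [← hy]
    have h : u ∈ s(u, u) := Sym2.mem_mk_left u u
    rw [dif_pos h]
    have : Sym2.Mem.other h = u := by
      have := Sym2.other_spec h
      rw [Sym2.eq_iff] at this
      tauto
    rw [this]; simp
  · subst hx
    have h : u ∈ s(u, y) := Sym2.mem_mk_left u y
    rw [dif_pos h]
    have : Sym2.Mem.other h = y := by
      have := Sym2.other_spec h
      rw [Sym2.eq_iff] at this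
      rcases this with ⟨-, h2⟩ | ⟨h1, -⟩
      · exact h2
      · exact absurd h1.symm (by exact fun hh => hy hh.symm)
    rw [this]; simp [hy]
  · subst hy
    have h : u ∈ s(x, u) := Sym2.mem_mk_right x u
    rw [dif_pos h]
    have : Sym2.Mem.other h = x := by
      have := Sym2.other_spec h
      rw [Sym2.eq_iff] at this
      rcases this with ⟨h1, -⟩ | ⟨-, h2⟩
      · exact absurd h1 hx
      · exact h2
    rw [this]; simp [hx]
  · rw [dif_neg (by simp [Sym2.mem_iff, hx, hy]), if_neg hx, if_neg hy, add_zero]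


/-- If `G` is closed in the `d`-rigidity matroid, `A` induces a clique in `G`,
and `v ∉ A` has at least `d` neighbors in `A`, then `A ∪ {v}` induces a clique in `G`. -/
theorem stmt_5 (d n : ℕ) (hd : 1 ≤ d) (hn : d < n) (G : SimpleGraph (Fin n))
    (hG : RigidityClosed n d G) (A : Set (Fin n)) (hA : G.IsClique A)
    (v : Fin n) (hv : v ∉ A)
    (hadj : d ≤ {a : Fin n | a ∈ A ∧ G.Adj v a}.ncard) :
    G.IsClique (A ∪ {v}) := by
  classical
  -- a generic embedding
  obtain ⟨x0, hx0⟩ := exists_algIndep (n * d)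
  set pt : Fin n → Fin d → ℝ := fun a b => x0 (finProdFinEquiv (a, b)) with hptdef
  have hpt : IsGeneric pt := hx0.comp (fun vi : Fin n × Fin d => finProdFinEquiv vi)
    (finProdFinEquiv.injective)
  have hclosed := hG pt hpt
  set Spn := Submodule.span ℝ (rRow pt '' G.edgeSet) with hSpn
  -- the key claim
  have key : ∀ a ∈ A, G.Adj v a := by
    intro a ha
    by_cases hadjva : G.Adj v a
    · exact hadjva
    -- extract d neighbors of v in A, avoiding a
    obtain ⟨B, hBsub, hBcard⟩ := Set.exists_subset_card_eq hadj
    have hBfin : B.Finite := Set.toFinite B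
    have haB : a ∉ B := fun h => hadjva (hBsub h).2
    have hvB : v ∉ B := fun h => hv (hBsub h).1
    have hva : v ≠ a := fun h => hv (h ▸ ha)
    -- enumerate B
    set BF := hBfin.toFinset with hBF
    have hBFcard : BF.card = d := by
      rw [hBF, ← Set.ncard_eq_toFinset_card B hBfin]; exact hBcard
    set e := BF.equivFinOfCardEq hBFcard with he
    set g : Fin d → Fin n := fun i => (e.symm i : Fin n) with hg
    have hgmem : ∀ i, g i ∈ B := fun i => hBfin.mem_toFinset.1 (e.symm i).2
    have hginj : Function.Injective g :=
      Subtype.val_injective.comp e.symm.injective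
    -- the d+2 vertices
    set f : Fin (d+2) → Fin n := Fin.cons v (Fin.cons a g) with hfdef
    have hf0 : f 0 = v := rfl
    have hf1 : f 1 = a := rfl
    have hfss : ∀ i : Fin d, f (i.succ.succ) = g i := fun i => by
      simp [hfdef]
    have hfinj : Function.Injective f := by
      rw [hfdef, Fin.cons_injective_iff, Fin.cons_injective_iff]
      refine ⟨?_, ?_, hginj⟩
      · rintro ⟨i, hi⟩
        revert hi
        refine Fin.cases ?_ (fun i' => ?_) i <;> intro hi
        · rw [Fin.cons_zero] at hi
          exact hva hi.symm
        · rw [Fin.cons_succ] at hi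
          exact hvB (hi ▸ hgmem i')
      · rintro ⟨i, hi⟩
        exact haB (hi ▸ hgmem i)
    -- lifted vectors
    set W : Fin (d+2) → (Fin (d+1) → ℝ) := fun i => Fin.cons 1 (pt (f i)) with hW
    have hdep : ¬ LinearIndependent ℝ W := by
      intro h
      have h1 := h.fintype_card_le_finrank
      rw [Module.finrank_pi ℝ] at h1
      simp [Fintype.card_fin] at h1
    obtain ⟨lam, hrel, i₀, hi₀⟩ := Fintype.not_linearIndependent_iff.1 hdep
    have hlamne : ∀ k, lam k ≠ 0 := by
      intro k hk0
      have hli := generic_linIndep hpt (f ∘ k.succAbove)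
        (hfinj.comp Fin.succAbove_right_injective)
      rw [Fintype.linearIndependent_iff] at hli
      have hsplit := Fin.sum_univ_succAbove (fun i => lam i • W i) k
      rw [hrel, hk0, zero_smul, zero_add] at hsplit
      have hz : ∀ i : Fin (d+1), lam (k.succAbove i) = 0 := by
        apply hli
        exact hsplit.symm
      obtain ⟨m, hm⟩ := Fin.exists_succAbove_eq (show i₀ ≠ k from fun h => hi₀ (h ▸ hk0))
      exact hi₀ (hm ▸ hz m)
    have hsum0 : ∑ i, lam i = 0 := by
      have h := congrFun hrel 0
      simpa [hW, Finset.sum_apply] using h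
    have hsumc : ∀ c : Fin d, ∑ i, lam i * pt (f i) c = 0 := fun c => by
      have h := congrFun hrel (Fin.succ c)
      simpa [hW, Finset.sum_apply] using h
    -- the stress identity
    have main : ∀ (u : Fin n) (c : Fin d), ∑ i : Fin (d+2), ∑ j : Fin (d+2),
        lam i * lam j * (if u = f i then pt (f i) c - pt (f j) c else 0) = 0 := by
      intro u c
      apply Finset.sum_eq_zero
      intro i _
      by_cases hu : u = f i
      · simp only [if_pos hu]
        have : ∀ j ∈ Finset.univ, lam i * lam j * (pt (f i) c - pt (f j) c)
            = lam i * (lam j * pt (f i) c - lam j * pt (f j) c) := by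
          intro j _; ring
        rw [Finset.sum_congr rfl this, ← Finset.mul_sum, Finset.sum_sub_distrib,
          ← Finset.sum_mul, hsum0, hsumc c, zero_mul, sub_zero, mul_zero]
      · simp [if_neg hu]
    have hT : ∑ i : Fin (d+2), ∑ j : Fin (d+2),
        (lam i * lam j) • rRow pt s(f i, f j) = 0 := by
      funext uc
      obtain ⟨u, c⟩ := uc
      simp only [Finset.sum_apply, Pi.smul_apply, smul_eq_mul, Pi.zero_apply]
      have hexp : ∀ i j : Fin (d+2), lam i * lam j * rRow pt s(f i, f j) (u, c)
          = lam i * lam j * (if u = f i then pt (f i) c - pt (f j) c else 0)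
            + lam i * lam j * (if u = f j then pt (f j) c - pt (f i) c else 0) := by
        intro i j
        rw [rRow_apply pt (f i) (f j) u c, mul_add]
      simp only [hexp, Finset.sum_add_distrib]
      rw [main u c, zero_add]
      rw [Finset.sum_comm]
      calc ∑ j : Fin (d+2), ∑ i : Fin (d+2),
            lam i * lam j * (if u = f j then pt (f j) c - pt (f i) c else 0)
          = ∑ j : Fin (d+2), ∑ i : Fin (d+2),
            lam j * lam i * (if u = f j then pt (f j) c - pt (f i) c else 0) := by
            apply Finset.sum_congr rfl; intro j _; apply Finset.sum_congr rfl; intro i _; ring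
        _ = 0 := main u c
    -- membership of vertices
    have hfA : ∀ i : Fin (d+2), i ≠ 0 → f i ∈ A := by
      intro i hi
      obtain ⟨i', rfl⟩ := Fin.exists_succ_eq.2 hi
      refine Fin.cases ?_ (fun i'' => ?_) i'
      · exact ha
      · rw [hfss i'']; exact (hBsub (hgmem i'')).1
    have hadjv : ∀ i : Fin (d+2), i ≠ 0 → i ≠ 1 → G.Adj v (f i) := by
      intro i hi0 hi1
      obtain ⟨i', rfl⟩ := Fin.exists_succ_eq.2 hi0
      revert hi1
      refine Fin.cases ?_ (fun i'' => ?_) i' <;> intro hi1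
      · exact absurd Fin.succ_zero_eq_one hi1
      · rw [hfss i'']; exact (hBsub (hgmem i'')).2
    have hadjf : ∀ i j : Fin (d+2), i ≠ j → (i, j) ≠ (0, 1) → (i, j) ≠ (1, 0) →
        G.Adj (f i) (f j) := by
      intro i j hij h01 h10
      by_cases hi0 : i = 0
      · subst hi0
        have hj1 : j ≠ 1 := fun h => h01 (by rw [h])
        rw [hf0]
        exact hadjv j (Ne.symm hij) hj1
      by_cases hj0 : j = 0
      · subst hj0
        have hi1 : i ≠ 1 := fun h => h10 (by rw [h])
        rw [hf0]
        exact (hadjv i hi0 hi1).symm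
      · exact hA (hfA i hi0) (hfA j hj0) (hfinj.ne hij)
    -- span membership of the other terms
    have hmem : ∀ p : Fin (d+2) × Fin (d+2), p ≠ (0, 1) → p ≠ (1, 0) →
        (lam p.1 * lam p.2) • rRow pt s(f p.1, f p.2) ∈ Spn := by
      rintro ⟨i, j⟩ h01 h10
      by_cases hij : i = j
      · subst hij
        have hz : rRow pt s(f i, f i) = 0 := by
          funext uc
          obtain ⟨u, c⟩ := uc
          rw [rRow_apply]
          simp only [sub_self, ite_self, add_zero]
          rfl
        rw [hz, smul_zero]
        exact Spn.zero_mem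
      · exact Submodule.smul_mem _ _ (Submodule.subset_span
          ⟨s(f i, f j), G.mem_edgeSet.2 (hadjf i j hij h01 h10), rfl⟩)
    have h2sne : ((0, 1) : Fin (d+2) × Fin (d+2)) ≠ (1, 0) := by
      intro h
      have h' := congrArg Prod.fst h
      simp at h'
    set s2 : Finset (Fin (d+2) × Fin (d+2)) := {(0, 1), (1, 0)} with hs2def
    set term : Fin (d+2) × Fin (d+2) → (Fin n × Fin d → ℝ) :=
      fun p => (lam p.1 * lam p.2) • rRow pt s(f p.1, f p.2) with hterm
    have huniv : ∑ p : Fin (d+2) × Fin (d+2), term p = 0 := by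
      rw [Fintype.sum_prod_type]
      exact hT
    have hsdiff := Finset.sum_sdiff (Finset.subset_univ s2) (f := term)
    rw [huniv] at hsdiff
    have hs2sum : ∑ p ∈ s2, term p = (2 * (lam 0 * lam 1)) • rRow pt s(v, a) := by
      rw [hs2def, Finset.sum_pair h2sne, hterm]
      simp only
      rw [show s(f 1, f 0) = s(f 0, f 1) from Sym2.eq_swap, hf0, hf1,
        show lam 1 * lam 0 = lam 0 * lam 1 from mul_comm _ _, ← add_smul, ← two_mul]
    rw [hs2sum] at hsdiff
    have hSmem : ∑ p ∈ Finset.univ \ s2, term p ∈ Spn := by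
      apply Submodule.sum_mem
      intro p hp
      rw [Finset.mem_sdiff, hs2def] at hp
      have h1 : p ≠ (0, 1) := fun h => hp.2 (by rw [h]; exact Finset.mem_insert_self _ _)
      have h2 : p ≠ (1, 0) := fun h => hp.2 (by rw [h]; exact Finset.mem_insert_of_mem (Finset.mem_singleton_self _))
      exact hmem p h1 h2
    have hc : (2 * (lam 0 * lam 1)) ≠ 0 := by
      have := hlamne 0
      have := hlamne 1
      positivity
    have hrVA : rRow pt s(v, a) ∈ Spn := by
      have heq : rRow pt s(v, a)
          = (2 * (lam 0 * lam 1))⁻¹ • ((2 * (lam 0 * lam 1)) • rRow pt s(v, a)) := by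
        rw [inv_smul_smul₀ hc]
      rw [heq, show (2 * (lam 0 * lam 1)) • rRow pt s(v, a) = -∑ p ∈ Finset.univ \ s2, term p from
        eq_neg_of_add_eq_zero_left ((add_comm _ _).trans hsdiff)]
      exact Submodule.smul_mem _ _ (Submodule.neg_mem _ hSmem)
    have hclo : (rigidityClosure n d pt G).Adj v a := ⟨hva, hrVA⟩
    rw [hclosed] at hclo
    exact hclo
  -- conclude the clique
  intro x hx y hy hxy
  rcases hx with hx | hx <;> rcases hy with hy | hy
  · exact hA hx hy hxy
  · rw [Set.mem_singleton_iff] at hy; subst hy; exact (key x hx).symm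
  · rw [Set.mem_singleton_iff] at hx; subst hx; exact key y hy
  · rw [Set.mem_singleton_iff] at hx hy; exact absurd (hx.trans hy.symm) hxy
end

section
/- Let d ≥ 1 be an integer and let G be a graph on vertex set [n] with n > d that is closed in the d-rigidity matroid. Suppose A, B ⊆ [n] are disjoint vertex subsets each inducing a clique in G, and suppose G contains a matching of (d+1 choose 2) edges between A and B (i.e., (d+1 choose 2) pairwise vertex-disjoint edges, each with one endpoint in A and one in B). Then A ∪ B induces a clique in G. -/
open MvPolynomial

lemma exists_generic (n d : ℕ) : ∃ pt : Fin n → Fin d → ℝ, IsGeneric pt := by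
  obtain ⟨s, hs⟩ := exists_isTranscendenceBasis ℚ ℝ
  haveI htr : Algebra.Transcendental ℚ ℝ := by
    rw [Algebra.transcendental_iff_not_isAlgebraic]
    intro halg
    have h1 : (Cardinal.mk ℝ) ≤ max (Cardinal.mk ℚ) Cardinal.aleph0 :=
      Algebra.IsAlgebraic.cardinalMk_le_max ℚ ℝ
    rw [Cardinal.mk_real, Cardinal.mk_denumerable ℚ, max_self] at h1
    exact absurd h1 (not_le.2 Cardinal.aleph0_lt_continuum)
  haveI hne : Nonempty s := hs.nonempty_iff_transcendental.2 htr
  haveI hinf : Infinite s := by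
    rw [Cardinal.infinite_iff]
    by_contra h
    push_neg at h
    have h2 := hs.lift_cardinalMk_eq_max_lift
    simp only [Cardinal.lift_id] at h2
    rw [Cardinal.mk_real, Cardinal.mk_denumerable ℚ] at h2
    have : Cardinal.continuum ≤ Cardinal.aleph0 := by
      rw [h2]
      exact max_le (max_le le_rfl h.le) le_rfl
    exact absurd this (not_le.2 Cardinal.aleph0_lt_continuum)
  let f : ℕ ↪ s := Infinite.natEmbedding s
  let g : Fin n × Fin d ↪ ℕ :=
    (Fintype.equivFin (Fin n × Fin d)).toEmbedding.trans (Fin.valEmbedding)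
  refine ⟨fun v j => ((f (g (v, j))) : ℝ), ?_⟩
  have := hs.1.comp (fun vi => f (g vi)) (f.injective.comp g.injective)
  exact this

lemma IsGeneric.aeval_ne_zero {n d : ℕ} {pt : Fin n → Fin d → ℝ} (h : IsGeneric pt)
    (P : MvPolynomial (Fin n × Fin d) ℚ) (pt0 : Fin n → Fin d → ℝ)
    (h0 : aeval (fun vi : Fin n × Fin d => pt0 vi.1 vi.2) P ≠ 0) :
    aeval (fun vi : Fin n × Fin d => pt vi.1 vi.2) P ≠ 0 := by
  intro hz
  have hinj := algebraicIndependent_iff_injective_aeval.1 h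
  have : P = 0 := hinj (by rw [hz, map_zero])
  rw [this, map_zero] at h0
  exact h0 rfl

lemma IsGeneric.det_ne_zero {n d : ℕ} {κ : Type} [Fintype κ] [DecidableEq κ]
    {pt : Fin n → Fin d → ℝ} (h : IsGeneric pt)
    (M : Matrix κ κ (MvPolynomial (Fin n × Fin d) ℚ)) (pt0 : Fin n → Fin d → ℝ)
    (h0 : (M.map (aeval (fun vi : Fin n × Fin d => pt0 vi.1 vi.2))).det ≠ 0) :
    (M.map (aeval (fun vi : Fin n × Fin d => pt vi.1 vi.2))).det ≠ 0 := by
  have key : ∀ q : Fin n → Fin d → ℝ,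
      (M.map (aeval (fun vi : Fin n × Fin d => q vi.1 vi.2))).det
        = aeval (fun vi : Fin n × Fin d => q vi.1 vi.2) M.det := by
    intro q
    rw [AlgHom.map_det]
    rfl
  rw [key] at h0 ⊢
  exact h.aeval_ne_zero M.det pt0 h0


open Matrix

lemma mem_span_of_dual {ι : Type} [Fintype ι] (S : Set (ι → ℝ)) (v : ι → ℝ)
    (h : ∀ q : ι → ℝ, (∀ u ∈ S, ∑ i, u i * q i = 0) → ∑ i, v i * q i = 0) :
    v ∈ Submodule.span ℝ S := by
  classical
  set e : (ι → ℝ) ≃ₗ[ℝ] EuclideanSpace ℝ ι := (WithLp.linearEquiv 2 ℝ (ι → ℝ)).symm with he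
  set K : Submodule ℝ (EuclideanSpace ℝ ι) := Submodule.span ℝ (⇑e '' S) with hK
  have hcoe : ∀ (w : EuclideanSpace ℝ ι) (i : ι), w i = (WithLp.equiv 2 (ι → ℝ)) w i :=
    fun w i => rfl
  have hinner : ∀ (a b : EuclideanSpace ℝ ι), (inner ℝ a b : ℝ) = ∑ i, a i * b i := by
    intro a b
    rw [PiLp.inner_apply]
    simp [RCLike.inner_apply, mul_comm]
  have hv : e v ∈ Kᗮᗮ := by
    rw [Submodule.mem_orthogonal]
    intro w hw
    have hq : ∀ u ∈ S, ∑ i, u i * (WithLp.equiv 2 (ι → ℝ)) w i = 0 := by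
      intro u hu
      have : (inner ℝ (e u) w : ℝ) = 0 := by
        rw [Submodule.mem_orthogonal] at hw
        exact hw (e u) (Submodule.subset_span ⟨u, hu, rfl⟩)
      rw [hinner] at this
      rw [← this]; exact Finset.sum_congr rfl fun i _ => rfl
    have h2 := h _ hq
    rw [hinner]
    calc ∑ i, w i * (e v) i = ∑ i, v i * (WithLp.equiv 2 (ι → ℝ)) w i :=
          Finset.sum_congr rfl fun i _ => by show w i * v i = v i * w i; ring
      _ = 0 := h2
  rw [Submodule.orthogonal_orthogonal] at hv
  have hv' : e v ∈ Submodule.map (e : (ι → ℝ) →ₗ[ℝ] EuclideanSpace ℝ ι) (Submodule.span ℝ S) := by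
    rw [← Submodule.span_image]
    exact hv
  obtain ⟨u, hu, huv⟩ := Submodule.mem_map.1 hv'
  rwa [← e.injective huv]

lemma sym2_other_eq {n : ℕ} {u v : Fin n} (huv : u ≠ v) (h : u ∈ s(u, v)) :
    Sym2.Mem.other h = v := by
  have := Sym2.other_spec h
  rw [Sym2.eq_iff] at this
  rcases this with ⟨-, h2⟩ | ⟨h1, -⟩
  · exact h2
  · exact absurd h1 huv

lemma rRow_dot {n d : ℕ} (pt : Fin n → Fin d → ℝ) {u v : Fin n} (huv : u ≠ v)
    (q : Fin n × Fin d → ℝ) :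
    ∑ vi : Fin n × Fin d, rRow pt s(u, v) vi * q vi
      = ∑ j, (pt u j - pt v j) * (q (u, j) - q (v, j)) := by
  classical
  rw [Fintype.sum_prod_type]
  have hzero : ∀ w ∈ (Finset.univ : Finset (Fin n)), w ∉ ({u, v} : Finset (Fin n)) →
      (∑ j, rRow pt s(u, v) (w, j) * q (w, j)) = 0 := by
    intro w _ hw
    simp only [Finset.mem_insert, Finset.mem_singleton, not_or] at hw
    apply Finset.sum_eq_zero
    intro j _
    have : ¬ ((w, j).1 ∈ s(u, v)) := by
      rw [Sym2.mem_iff]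
      push_neg
      exact hw
    rw [rRow, dif_neg this, zero_mul]
  rw [← Finset.sum_subset (Finset.subset_univ ({u, v} : Finset (Fin n))) hzero,
    Finset.sum_pair huv]
  have hu' : ∀ j, rRow pt s(u, v) (u, j) = pt u j - pt v j := by
    intro j
    have hm : (u, j).1 ∈ s(u, v) := by simp
    rw [rRow, dif_pos hm, sym2_other_eq huv hm]
  have hv' : ∀ j, rRow pt s(u, v) (v, j) = pt v j - pt u j := by
    intro j
    have hm : (v, j).1 ∈ s(u, v) := by simp
    have hm' : (v, j).1 ∈ s(v, u) := by simp
    rw [rRow]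
    have : s(u, v) = s(v, u) := Sym2.eq_swap
    rw [this]
    rw [dif_pos hm', sym2_other_eq huv.symm hm']
  simp only [hu', hv']
  rw [← Finset.sum_add_distrib]
  exact Finset.sum_congr rfl fun j _ => by ring

lemma skew_entry {d : ℕ} {S : Matrix (Fin d) (Fin d) ℝ} (hS : Sᵀ = -S) (i j : Fin d) :
    S j i = - S i j := by
  have := congrFun (congrFun hS i) j
  simpa [Matrix.transpose_apply, Matrix.neg_apply] using this

lemma dot_mulVec_eq {d : ℕ} (S : Matrix (Fin d) (Fin d) ℝ) (u v : Fin d → ℝ) :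
    u ⬝ᵥ S.mulVec v = ∑ i, ∑ j, u i * (S i j * v j) := by
  simp [dotProduct, Matrix.mulVec, Finset.mul_sum]

lemma skew_dot_comm {d : ℕ} {S : Matrix (Fin d) (Fin d) ℝ} (hS : Sᵀ = -S) (u v : Fin d → ℝ) :
    u ⬝ᵥ S.mulVec v = -(v ⬝ᵥ S.mulVec u) := by
  rw [dot_mulVec_eq, dot_mulVec_eq, ← Finset.sum_neg_distrib, Finset.sum_comm]
  refine Finset.sum_congr rfl fun i _ => ?_
  rw [← Finset.sum_neg_distrib]
  refine Finset.sum_congr rfl fun j _ => ?_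
  rw [skew_entry hS j i]
  ring

lemma skew_dot {d : ℕ} {S : Matrix (Fin d) (Fin d) ℝ} (hS : Sᵀ = -S) (v : Fin d → ℝ) :
    v ⬝ᵥ S.mulVec v = 0 := by
  have := skew_dot_comm hS v v
  linarith

lemma dot_expand {d : ℕ} (a b c u v w : Fin d → ℝ) :
    (a - b) ⬝ᵥ (u - v) = (a - c) ⬝ᵥ (u - w) - (a - c) ⬝ᵥ (v - w)
      - (b - c) ⬝ᵥ (u - w) + (b - c) ⬝ᵥ (v - w) := by
  simp only [dotProduct, Pi.sub_apply, ← Finset.sum_sub_distrib,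
    ← Finset.sum_add_distrib]
  exact Finset.sum_congr rfl fun k _ => by ring

lemma clique_motion {n d : ℕ} {pt : Fin n → Fin d → ℝ} (hpt : IsGeneric pt)
    (C : Set (Fin n)) (z : Fin (d + 1) → Fin n) (hz : Function.Injective z)
    (hzC : ∀ i, z i ∈ C) (Q : Fin n → Fin d → ℝ)
    (hQ : ∀ u ∈ C, ∀ v ∈ C, (pt u - pt v) ⬝ᵥ (Q u - Q v) = 0) :
    ∃ (S : Matrix (Fin d) (Fin d) ℝ) (t : Fin d → ℝ),
      Sᵀ = -S ∧ ∀ v ∈ C, Q v = S.mulVec (pt v) + t := by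
  classical
  set p : Fin (d + 1) → Fin d → ℝ := fun i => pt (z i) with hp
  set qv : Fin (d + 1) → Fin d → ℝ := fun i => Q (z i) with hqv
  -- the matrix of differences
  set P : Matrix (Fin d) (Fin d) ℝ := Matrix.of (fun i j => p i.succ j - p 0 j) with hP
  -- P has nonzero determinant by genericity
  have hdet : P.det ≠ 0 := by
    have := hpt.det_ne_zero
      (Matrix.of (fun i j : Fin d => (MvPolynomial.X (z i.succ, j) : MvPolynomial (Fin n × Fin d) ℚ)
        - MvPolynomial.X (z 0, j)))
      (fun v j => if v = z j.succ then 1 else 0) ?_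
    · convert this using 2
      ext i j
      simp [Matrix.map_apply, hP, hp]
    · have : (Matrix.of (fun i j : Fin d =>
          (MvPolynomial.X (z i.succ, j) : MvPolynomial (Fin n × Fin d) ℚ)
          - MvPolynomial.X (z 0, j))).map
          (MvPolynomial.aeval (fun vi : Fin n × Fin d =>
            (if vi.1 = z vi.2.succ then (1:ℝ) else 0))) = 1 := by
        ext i j
        simp only [Matrix.map_apply, Matrix.of_apply, map_sub, MvPolynomial.aeval_X]
        have h1 : (z i.succ = z j.succ) ↔ (i = j) := by
          constructor
          · intro h; exact Fin.succ_injective d (hz h)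
          · intro h; rw [h]
        have h2 : ¬ (z 0 = z j.succ) := by
          intro h
          exact (Fin.succ_ne_zero j) (hz h).symm
        by_cases hij : i = j
        · simp [h1, h2, hij, Matrix.one_apply]
        · simp [hij, h1, h2, Matrix.one_apply]
      rw [this]
      simp
  have hunit : IsUnit P.det := isUnit_iff_ne_zero.2 hdet
  set Qd : Matrix (Fin d) (Fin d) ℝ := Matrix.of (fun i j => qv i.succ j - qv 0 j) with hQd
  set S : Matrix (Fin d) (Fin d) ℝ := (P⁻¹ * Qd)ᵀ with hS
  have hPS : P * Sᵀ = Qd := by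
    rw [hS, Matrix.transpose_transpose, ← Matrix.mul_assoc, Matrix.mul_nonsing_inv _ hunit,
      Matrix.one_mul]
  have hSrow : ∀ i : Fin d, S.mulVec (p i.succ - p 0) = qv i.succ - qv 0 := by
    intro i
    funext j
    have := congrFun (congrFun hPS i) j
    rw [Matrix.mul_apply] at this
    simp only [Matrix.transpose_apply, hQd, Matrix.of_apply] at this
    simp only [Matrix.mulVec, dotProduct, Pi.sub_apply]
    rw [← this]
    exact Finset.sum_congr rfl fun k _ => by simp [hP, mul_comm]
  -- constraints between base points
  have hbasecon : ∀ i j : Fin (d + 1), (p i - p j) ⬝ᵥ (qv i - qv j) = 0 :=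
    fun i j => hQ (z i) (hzC i) (z j) (hzC j)
  -- skewness
  have hTzero : S + Sᵀ = 0 := by
    have key : P * ((S + Sᵀ) * Pᵀ) = 0 := by
      have hentry : ∀ i j : Fin d, (P * ((S + Sᵀ) * Pᵀ)) i j = 0 := by
        intro i j
        have hiv : (P * ((S + Sᵀ) * Pᵀ)) i j
            = (p i.succ - p 0) ⬝ᵥ (S + Sᵀ).mulVec (p j.succ - p 0) := by
          simp only [Matrix.mul_apply, Matrix.mulVec, dotProduct,
            Matrix.transpose_apply, Pi.sub_apply, hP, Matrix.of_apply, Finset.mul_sum]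
        rw [hiv, Matrix.add_mulVec, dotProduct_add]
        have e1 : (p i.succ - p 0) ⬝ᵥ S.mulVec (p j.succ - p 0)
            = (p i.succ - p 0) ⬝ᵥ (qv j.succ - qv 0) := by rw [hSrow]
        have e2 : (p i.succ - p 0) ⬝ᵥ Sᵀ.mulVec (p j.succ - p 0)
            = (p j.succ - p 0) ⬝ᵥ (qv i.succ - qv 0) := by
          rw [dotProduct_mulVec, Matrix.vecMul_transpose, dotProduct_comm, hSrow]
        rw [e1, e2]
        have h1 := hbasecon i.succ j.succ
        have h2 := hbasecon i.succ 0
        have h3 := hbasecon j.succ 0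
        have hx := dot_expand (p i.succ) (p j.succ) (p 0) (qv i.succ) (qv j.succ) (qv 0)
        have hsub : ∀ k : Fin (d+1), p k - p 0 = p k - p 0 := fun _ => rfl
        have hz1 : (p i.succ - p 0) ⬝ᵥ (qv i.succ - qv 0) = 0 := by
          have := hbasecon i.succ 0; simpa using this
        have hz2 : (p j.succ - p 0) ⬝ᵥ (qv j.succ - qv 0) = 0 := by
          have := hbasecon j.succ 0; simpa using this
        have hz3 : (p i.succ - p j.succ) ⬝ᵥ (qv i.succ - qv j.succ) = 0 := hbasecon i.succ j.succ
        rw [hx] at hz3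
        linarith
      ext i j
      rw [hentry]
      simp
    have h1 : (S + Sᵀ) * Pᵀ = 0 := by
      have := congrArg (fun M => P⁻¹ * M) key
      simpa [← Matrix.mul_assoc, Matrix.nonsing_inv_mul _ hunit] using this
    have hunitT : IsUnit Pᵀ.det := by rwa [Matrix.det_transpose]
    have := congrArg (fun M => M * (Pᵀ)⁻¹) h1
    simpa [Matrix.mul_assoc, Matrix.mul_nonsing_inv _ hunitT] using this
  have hskew : Sᵀ = -S := by
    have h := hTzero
    rw [add_comm] at h
    exact eq_neg_of_add_eq_zero_left h
  set t : Fin d → ℝ := qv 0 - S.mulVec (p 0) with ht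
  have hbase : ∀ i : Fin (d + 1), qv i = S.mulVec (p i) + t := by
    intro i
    rcases Fin.eq_zero_or_eq_succ i with h0 | ⟨j, hj⟩
    · rw [h0, ht]
      abel
    · have h2 : S.mulVec (p j.succ) - S.mulVec (p 0) = qv j.succ - qv 0 := by
        rw [← Matrix.mulVec_sub]
        exact hSrow j
      rw [hj, ht]
      calc qv j.succ = (S.mulVec (p j.succ) - S.mulVec (p 0)) + qv 0 := by rw [h2]; abel
        _ = S.mulVec (p j.succ) + (qv 0 - S.mulVec (p 0)) := by abel
  refine ⟨S, t, hskew, ?_⟩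
  intro v hv
  set r : Fin d → ℝ := Q v - S.mulVec (pt v) - t with hr
  have hri : ∀ i : Fin (d + 1), (pt v - p i) ⬝ᵥ r = 0 := by
    intro i
    have hc := hQ v hv (z i) (hzC i)
    have hdecomp : Q v - qv i = r + S.mulVec (pt v - p i) := by
      rw [hbase i, hr, Matrix.mulVec_sub]
      abel
    rw [hdecomp, dotProduct_add, skew_dot hskew] at hc
    linarith
  have hPr : P.mulVec r = 0 := by
    funext i
    show (fun j => P i j) ⬝ᵥ r = 0
    have hkey : (fun j => P i j) = (pt v - p 0) - (pt v - p i.succ) := by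
      funext j
      simp [hP]
    rw [hkey, sub_dotProduct, hri, hri, sub_zero]
  have hr0 : r = 0 := by
    have h2 : P⁻¹.mulVec (P.mulVec r) = r := by
      rw [Matrix.mulVec_mulVec, Matrix.nonsing_inv_mul _ hunit, Matrix.one_mulVec]
    rw [hPr, Matrix.mulVec_zero] at h2
    exact h2.symm
  have : Q v - (S.mulVec (pt v) + t) = 0 := by
    rw [← sub_sub]
    exact hr0
  rw [sub_eq_zero] at this
  exact this

abbrev PairLt (d : ℕ) := {p : Fin d × Fin d // p.1 < p.2}

def pairEquiv (d : ℕ) : PairLt d ≃ Σ j : Fin d, Fin j.val where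
  toFun p := ⟨p.1.2, ⟨p.1.1.val, p.2⟩⟩
  invFun s := ⟨(⟨s.2.val, lt_trans s.2.isLt s.1.isLt⟩, s.1), s.2.isLt⟩
  left_inv p := by
    rcases p with ⟨⟨a, b⟩, h⟩
    rfl
  right_inv s := by
    rcases s with ⟨j, i⟩
    rfl

lemma card_pairLt (d : ℕ) : Fintype.card (PairLt d) = d.choose 2 := by
  rw [Fintype.card_congr (pairEquiv d), Fintype.card_sigma]
  simp only [Fintype.card_fin]
  rw [show (∑ x : Fin d, (x : ℕ)) = ∑ i ∈ Finset.range d, i from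
    Fin.sum_univ_eq_sum_range (fun i => i) d]
  rw [Finset.sum_range_id, Nat.choose_two_right]

lemma card_kappa (d : ℕ) : Fintype.card (Fin d ⊕ PairLt d) = (d + 1).choose 2 := by
  rw [Fintype.card_sum, Fintype.card_fin, card_pairLt]
  rw [Nat.choose_succ_succ, Nat.choose_one_right]

lemma dot_skew_split {d : ℕ} {S : Matrix (Fin d) (Fin d) ℝ} (hS : Sᵀ = -S) (u v : Fin d → ℝ) :
    u ⬝ᵥ S.mulVec v
      = ∑ p : PairLt d, S p.1.1 p.1.2 * (u p.1.1 * v p.1.2 - u p.1.2 * v p.1.1) := by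
  classical
  have hdiag : ∀ k : Fin d, S k k = 0 := by
    intro k
    have := skew_entry hS k k
    linarith
  have expand : u ⬝ᵥ S.mulVec v = ∑ q : Fin d × Fin d, u q.1 * (S q.1 q.2 * v q.2) := by
    rw [dot_mulVec_eq, Fintype.sum_prod_type]
  set f : Fin d × Fin d → ℝ := fun q => u q.1 * (S q.1 q.2 * v q.2) with hf
  have h1 : ∑ q : Fin d × Fin d, f q
      = ∑ q ∈ Finset.univ.filter (fun q : Fin d × Fin d => q.1 < q.2), f q
        + ∑ q ∈ Finset.univ.filter (fun q : Fin d × Fin d => ¬ q.1 < q.2), f q :=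
    (Finset.sum_filter_add_sum_filter_not Finset.univ _ f).symm
  have h2 : ∑ q ∈ Finset.univ.filter (fun q : Fin d × Fin d => ¬ q.1 < q.2), f q
      = ∑ q ∈ Finset.univ.filter (fun q : Fin d × Fin d => q.2 < q.1), f q := by
    refine (Finset.sum_subset ?_ ?_).symm
    · intro q hq
      simp only [Finset.mem_filter, Finset.mem_univ, true_and] at hq ⊢
      exact asymm hq
    · intro q hq hq2
      simp only [Finset.mem_filter, Finset.mem_univ, true_and, not_lt] at hq hq2
      have heq : q.1 = q.2 := le_antisymm hq2 hq
      rw [hf]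
      simp only [← heq, hdiag q.1, zero_mul, mul_zero]
  have h3 : ∑ q ∈ Finset.univ.filter (fun q : Fin d × Fin d => q.2 < q.1), f q
      = ∑ q ∈ Finset.univ.filter (fun q : Fin d × Fin d => q.1 < q.2), f (q.2, q.1) := by
    refine Finset.sum_nbij' (fun q => (q.2, q.1)) (fun q => (q.2, q.1)) ?_ ?_ ?_ ?_ ?_
    · intro a ha
      simp only [Finset.mem_filter, Finset.mem_univ, true_and] at ha ⊢
      exact ha
    · intro a ha
      simp only [Finset.mem_filter, Finset.mem_univ, true_and] at ha ⊢
      exact ha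
    · intro a _
      rfl
    · intro a _
      rfl
    · intro a _
      rfl
  have h4 : ∑ q ∈ Finset.univ.filter (fun q : Fin d × Fin d => q.1 < q.2), (f q + f (q.2, q.1))
      = ∑ p : PairLt d, S p.1.1 p.1.2 * (u p.1.1 * v p.1.2 - u p.1.2 * v p.1.1) := by
    rw [Finset.sum_subtype (p := fun q : Fin d × Fin d => q.1 < q.2)
      (Finset.univ.filter (fun q : Fin d × Fin d => q.1 < q.2))
      (fun q => by simp) (fun q => f q + f (q.2, q.1))]
    refine Finset.sum_congr rfl fun q _ => ?_
    rcases q with ⟨⟨a, b⟩, hab⟩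
    simp only [hf]
    rw [skew_entry hS a b]
    ring
  rw [expand, h1, h2, h3, ← h4, Finset.sum_add_distrib]

section Matching
open MvPolynomial

lemma matching_system {n d : ℕ} {pt : Fin n → Fin d → ℝ} (hpt : IsGeneric pt)
    (x y : Fin ((d + 1).choose 2) → Fin n)
    (hx : Function.Injective x) (hy : Function.Injective y)
    (hxy : ∀ i j, x i ≠ y j)
    (S : Matrix (Fin d) (Fin d) ℝ) (t : Fin d → ℝ) (hS : Sᵀ = -S)
    (hsys : ∀ i, pt (y i) ⬝ᵥ S.mulVec (pt (x i)) = (pt (x i) - pt (y i)) ⬝ᵥ t) :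
    S = 0 ∧ t = 0 := by
  classical
  set κ := (Fin d ⊕ PairLt d) with hκ
  set e : κ ≃ Fin ((d + 1).choose 2) := Fintype.equivFinOfCardEq (card_kappa d) with he
  set Mp : Matrix κ κ (MvPolynomial (Fin n × Fin d) ℚ) := Matrix.of fun c c' =>
    Sum.elim
      (fun j => (X (y (e c), j) : MvPolynomial (Fin n × Fin d) ℚ) - X (x (e c), j))
      (fun p => (X (x (e c), p.1.1) : MvPolynomial (Fin n × Fin d) ℚ) * X (y (e c), p.1.2)
        - X (x (e c), p.1.2) * X (y (e c), p.1.1)) c' with hMp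
  set M : Matrix κ κ ℝ :=
    Mp.map (aeval (fun vi : Fin n × Fin d => pt vi.1 vi.2)) with hM
  have hMent1 : ∀ c j, M c (Sum.inl j) = pt (y (e c)) j - pt (x (e c)) j := by
    intro c j
    simp [hM, hMp, Matrix.map_apply]
  have hMent2 : ∀ c (p : PairLt d), M c (Sum.inr p)
      = pt (x (e c)) p.1.1 * pt (y (e c)) p.1.2 - pt (x (e c)) p.1.2 * pt (y (e c)) p.1.1 := by
    intro c p
    simp [hM, hMp, Matrix.map_apply]
  -- the solution vector
  set w : κ → ℝ := Sum.elim (fun j => t j) (fun p => - S p.1.1 p.1.2) with hw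
  have hMw : M.mulVec w = 0 := by
    funext c
    show (fun c' => M c c') ⬝ᵥ w = 0
    rw [dotProduct, Fintype.sum_sum_type]
    have hpart1 : ∑ j : Fin d, M c (Sum.inl j) * w (Sum.inl j)
        = - ((pt (x (e c)) - pt (y (e c))) ⬝ᵥ t) := by
      rw [dotProduct, ← Finset.sum_neg_distrib]
      refine Finset.sum_congr rfl fun j _ => ?_
      rw [hMent1, hw]
      simp only [Sum.elim_inl, Pi.sub_apply]
      ring
    have hpart2 : ∑ p : PairLt d, M c (Sum.inr p) * w (Sum.inr p)
        = pt (y (e c)) ⬝ᵥ S.mulVec (pt (x (e c))) := by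
      rw [dot_skew_split hS]
      refine Finset.sum_congr rfl fun p _ => ?_
      rw [hMent2, hw]
      simp only [Sum.elim_inr]
      ring
    rw [hpart1, hpart2, hsys (e c)]
    show -((pt (x (e c)) - pt (y (e c))) ⬝ᵥ t) + (pt (x (e c)) - pt (y (e c))) ⬝ᵥ t = 0
    ring
  -- specialization point
  set gx : κ → Fin d → ℝ := Sum.elim (fun _ => 0)
    (fun p => fun j => if j = p.1.1 then 1 else 0) with hgx
  set gy : κ → Fin d → ℝ := Sum.elim (fun j' => fun j => if j = j' then 1 else 0)
    (fun p => fun j => if j = p.1.2 then 1 else 0) with hgy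
  set pt0 : Fin n → Fin d → ℝ :=
    Function.extend (fun c => x (e c)) gx (Function.extend (fun c => y (e c)) gy 0) with hpt0
  have hxe : Function.Injective (fun c => x (e c)) := hx.comp e.injective
  have hye : Function.Injective (fun c => y (e c)) := hy.comp e.injective
  have hpt0x : ∀ c, pt0 (x (e c)) = gx c := fun c => hxe.extend_apply _ _ c
  have hpt0y : ∀ c, pt0 (y (e c)) = gy c := by
    intro c
    rw [hpt0]
    rw [Function.extend_apply' _ _ _ (by rintro ⟨c', hc'⟩; exact hxy (e c') (e c) hc')]
    exact hye.extend_apply _ _ c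
  -- the specialized matrix is block triangular with unit diagonal blocks
  set C0 : Matrix (PairLt d) (Fin d) ℝ := Matrix.of fun p j =>
    (if j = p.1.2 then (1:ℝ) else 0) - (if j = p.1.1 then 1 else 0) with hC0
  have hM0 : Mp.map (aeval (fun vi : Fin n × Fin d => pt0 vi.1 vi.2))
      = Matrix.fromBlocks 1 0 C0 1 := by
    ext c c'
    have hent : ∀ c c', Mp.map (aeval (fun vi : Fin n × Fin d => pt0 vi.1 vi.2)) c c'
        = Sum.elim
          (fun j => gy c j - gx c j)
          (fun p : PairLt d => gx c p.1.1 * gy c p.1.2 - gx c p.1.2 * gy c p.1.1) c' := by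
      intro c c'
      rcases c' with j | p
      · simp [hMp, Matrix.map_apply, hpt0x, hpt0y]
      · simp [hMp, Matrix.map_apply, hpt0x, hpt0y]
    rw [hent]
    rcases c with j' | p' <;> rcases c' with j | p
    · simp only [Sum.elim_inl, hgx, hgy]
      rw [Matrix.fromBlocks_apply₁₁]
      simp only [Sum.elim_inl, Matrix.one_apply]
      by_cases h : j' = j
      · subst h; simp
      · simp [h, Ne.symm h]
    · simp only [Sum.elim_inr, hgx, hgy]
      rw [Matrix.fromBlocks_apply₁₂]
      simp
    · simp only [Sum.elim_inl, hgx, hgy]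
      rw [Matrix.fromBlocks_apply₂₁]
      simp [hC0]
    · simp only [Sum.elim_inr, hgx, hgy]
      rw [Matrix.fromBlocks_apply₂₂]
      rcases p' with ⟨⟨k', l'⟩, hp'⟩
      rcases p with ⟨⟨k, l⟩, hp⟩
      simp only [Matrix.one_apply]
      have hz2 : (if l = k' then (1:ℝ) else 0) * (if k = l' then 1 else 0) = 0 := by
        by_cases h1 : l = k'
        · by_cases h2 : k = l'
          · exfalso
            rw [← h1] at hp'
            rw [← h2] at hp'
            exact absurd (hp.trans hp') (lt_irrefl k)
          · simp [h2]
        · simp [h1]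
      by_cases hk : k = k'
      · by_cases hl : l = l'
        · have hpp : (⟨(k', l'), hp'⟩ : PairLt d) = ⟨(k, l), hp⟩ :=
            Subtype.ext (Prod.ext hk.symm hl.symm)
          rw [if_pos hpp, if_pos hk, if_pos hl, hz2]
          ring
        · have hpp : ¬ ((⟨(k', l'), hp'⟩ : PairLt d) = ⟨(k, l), hp⟩) := by
            intro hq
            exact hl ((Prod.ext_iff.1 (congrArg Subtype.val hq)).2).symm
          rw [if_neg hpp, if_pos hk, if_neg hl, hz2]
          ring
      · have hpp : ¬ ((⟨(k', l'), hp'⟩ : PairLt d) = ⟨(k, l), hp⟩) := by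
          intro hq
          exact hk ((Prod.ext_iff.1 (congrArg Subtype.val hq)).1).symm
        rw [if_neg hpp, if_neg hk, hz2]
        ring
  have hdet : M.det ≠ 0 := by
    refine hpt.det_ne_zero Mp pt0 ?_
    rw [hM0, Matrix.det_fromBlocks_zero₁₂, Matrix.det_one, Matrix.det_one]
    norm_num
  have hw0 : w = 0 := by
    have h2 : M⁻¹.mulVec (M.mulVec w) = w := by
      rw [Matrix.mulVec_mulVec, Matrix.nonsing_inv_mul _ (isUnit_iff_ne_zero.2 hdet),
        Matrix.one_mulVec]
    rw [hMw, Matrix.mulVec_zero] at h2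
    exact h2.symm
  constructor
  · ext k l
    rcases lt_trichotomy k l with h | h | h
    · have := congrFun hw0 (Sum.inr ⟨(k, l), h⟩)
      simp only [hw, Sum.elim_inr, Pi.zero_apply] at this
      have : S k l = 0 := by linarith [this]
      simpa using this
    · subst h
      have := skew_entry hS k k
      have : S k k = 0 := by linarith
      simpa using this
    · have := congrFun hw0 (Sum.inr ⟨(l, k), h⟩)
      simp only [hw, Sum.elim_inr, Pi.zero_apply] at this
      have h2 : S l k = 0 := by linarith [this]
      have := skew_entry hS l k
      have : S k l = 0 := by linarith
      simpa using this
  · funext j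
    have := congrFun hw0 (Sum.inl j)
    simpa [hw] using this

end Matching

lemma two_body_reduce {d : ℕ} {SA SB : Matrix (Fin d) (Fin d) ℝ} (hA : SAᵀ = -SA)
    (hB : SBᵀ = -SB) (px py tA tB : Fin d → ℝ)
    (h : (px - py) ⬝ᵥ ((SA.mulVec px + tA) - (SB.mulVec py + tB)) = 0) :
    py ⬝ᵥ (SA - SB).mulVec px = (px - py) ⬝ᵥ (tA - tB) := by
  have harg : (SA.mulVec px + tA) - (SB.mulVec py + tB)
      = (SA.mulVec px - SB.mulVec py) + (tA - tB) := by abel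
  rw [harg, dotProduct_add, dotProduct_sub, sub_dotProduct,
    sub_dotProduct] at h
  have e1 : px ⬝ᵥ SA.mulVec px = 0 := skew_dot hA px
  have e2 : py ⬝ᵥ SB.mulVec py = 0 := skew_dot hB py
  have e3 : px ⬝ᵥ SB.mulVec py = -(py ⬝ᵥ SB.mulVec px) := skew_dot_comm hB px py
  have e4 : py ⬝ᵥ (SA - SB).mulVec px = py ⬝ᵥ SA.mulVec px - py ⬝ᵥ SB.mulVec px := by
    rw [Matrix.sub_mulVec, dotProduct_sub]
  rw [e1, e2, e3] at h
  rw [e4]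
  linarith

lemma succ_le_choose {d : ℕ} (hd : 2 ≤ d) : d + 1 ≤ (d + 1).choose 2 := by
  rw [Nat.choose_two_right]
  have h1 : (d + 1) * 2 ≤ (d + 1) * d := Nat.mul_le_mul_left _ hd
  have h2 : (d + 1) * 2 / 2 ≤ (d + 1) * d / 2 := Nat.div_le_div_right h1
  simp only [Nat.add_sub_cancel]
  omega


/-- If `G` is closed in the `d`-rigidity matroid, `A`, `B` are disjoint cliques
in `G`, and there is a matching of `(d+1 choose 2)` edges of `G` between `A` and `B`, then
`A ∪ B` induces a clique in `G`. -/
theorem stmt_6 (d n : ℕ) (hd : 1 ≤ d) (hn : d < n) (G : SimpleGraph (Fin n))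
    (hG : RigidityClosed n d G) (A B : Set (Fin n)) (hAB : Disjoint A B)
    (hA : G.IsClique A) (hB : G.IsClique B)
    (x y : Fin ((d + 1).choose 2) → Fin n)
    (hx : Function.Injective x) (hy : Function.Injective y)
    (hxA : ∀ i, x i ∈ A) (hyB : ∀ i, y i ∈ B)
    (hadj : ∀ i, G.Adj (x i) (y i)) :
    G.IsClique (A ∪ B) := by
  classical
  have key : ∀ a ∈ A, ∀ b ∈ B, G.Adj a b := by
    intro a ha b hb
    have hab : a ≠ b := fun h => Set.disjoint_left.1 hAB ha (h ▸ hb)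
    obtain ⟨pt, hpt⟩ := exists_generic n d
    rw [← hG pt hpt]
    refine ⟨hab, ?_⟩
    apply mem_span_of_dual
    intro q hq
    set Q : Fin n → Fin d → ℝ := fun w j => q (w, j) with hQdef
    have hconv : ∀ u v : Fin n, (pt u - pt v) ⬝ᵥ (Q u - Q v)
        = ∑ j, (pt u j - pt v j) * (q (u, j) - q (v, j)) := by
      intro u v
      simp [dotProduct, hQdef]
    have hcon : ∀ u v : Fin n, G.Adj u v → (pt u - pt v) ⬝ᵥ (Q u - Q v) = 0 := by
      intro u v huv
      have hmem : rRow pt s(u, v) ∈ rRow pt '' G.edgeSet :=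
        ⟨s(u, v), G.mem_edgeSet.2 huv, rfl⟩
      have h0 := hq _ hmem
      rw [rRow_dot pt huv.ne q] at h0
      rw [hconv]
      exact h0
    have hxyne : ∀ i j, x i ≠ y j := fun i j h => Set.disjoint_left.1 hAB (hxA i) (h ▸ hyB j)
    have main : (pt a - pt b) ⬝ᵥ (Q a - Q b) = 0 := by
      by_cases hd2 : 2 ≤ d
      · -- general case
        have hm : d + 1 ≤ (d + 1).choose 2 := succ_le_choose hd2
        have hcliqueQ : ∀ (C : Set (Fin n)), G.IsClique C →
            ∀ u ∈ C, ∀ v ∈ C, (pt u - pt v) ⬝ᵥ (Q u - Q v) = 0 := by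
          intro C hC u hu v hv
          by_cases huv : u = v
          · subst huv
            rw [sub_self, zero_dotProduct]
          · exact hcon u v (hC hu hv huv)
        obtain ⟨SA, tA, hSA, hQA⟩ := clique_motion hpt A (fun i => x (Fin.castLE hm i))
          (hx.comp (Fin.castLE_injective hm)) (fun i => hxA _) Q (hcliqueQ A hA)
        obtain ⟨SB, tB, hSB, hQB⟩ := clique_motion hpt B (fun i => y (Fin.castLE hm i))
          (hy.comp (Fin.castLE_injective hm)) (fun i => hyB _) Q (hcliqueQ B hB)
        have hsys : ∀ i, pt (y i) ⬝ᵥ (SA - SB).mulVec (pt (x i))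
            = (pt (x i) - pt (y i)) ⬝ᵥ (tA - tB) := by
          intro i
          apply two_body_reduce hSA hSB
          have h1 := hcon (x i) (y i) (hadj i)
          rw [hQA (x i) (hxA i), hQB (y i) (hyB i)] at h1
          exact h1
        have hskewAB : (SA - SB)ᵀ = -(SA - SB) := by
          rw [Matrix.transpose_sub, hSA, hSB]
          abel
        obtain ⟨hS0, ht0⟩ := matching_system hpt x y hx hy hxyne _ _ hskewAB hsys
        have hSAB : SA = SB := sub_eq_zero.1 hS0
        have htAB : tA = tB := sub_eq_zero.1 ht0
        rw [hQA a ha, hQB b hb, hSAB, htAB]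
        have harg : (SB.mulVec (pt a) + tB) - (SB.mulVec (pt b) + tB)
            = SB.mulVec (pt a - pt b) := by
          rw [Matrix.mulVec_sub]
          abel
        rw [harg, skew_dot hSB]
      · -- d = 1
        have hd1 : d = 1 := by omega
        subst hd1
        have hne1 : ∀ u v : Fin n, u ≠ v → pt u 0 ≠ pt v 0 := by
          intro u v huv h
          have hvne : ((u : Fin n) : ℕ) ≠ ((v : Fin n) : ℕ) := fun hc => huv (Fin.ext hc)
          have hcast : ((u : ℕ) : ℝ) ≠ ((v : ℕ) : ℝ) := fun hc => hvne (Nat.cast_injective hc)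
          have := hpt.aeval_ne_zero
            ((MvPolynomial.X (u, 0) : MvPolynomial (Fin n × Fin 1) ℚ) - MvPolynomial.X (v, 0))
            (fun w _ => ((w : ℕ) : ℝ))
            (by
              rw [map_sub, MvPolynomial.aeval_X, MvPolynomial.aeval_X]
              exact sub_ne_zero.2 hcast)
          apply this
          rw [map_sub, MvPolynomial.aeval_X, MvPolynomial.aeval_X]
          exact sub_eq_zero.2 h
        have hQ01 : ∀ u v : Fin n, G.Adj u v → Q u 0 = Q v 0 := by
          intro u v huv
          have h1 := hcon u v huv
          rw [dotProduct, Fin.sum_univ_one] at h1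
          simp only [Pi.sub_apply] at h1
          rcases mul_eq_zero.1 h1 with h2 | h2
          · exact absurd (sub_eq_zero.1 h2) (hne1 u v huv.ne)
          · exact sub_eq_zero.1 h2
        set i0 : Fin ((1 + 1).choose 2) := ⟨0, by decide⟩ with hi0
        have hax : Q a 0 = Q (x i0) 0 := by
          by_cases h : a = x i0
          · rw [h]
          · exact hQ01 a (x i0) (hA ha (hxA i0) h)
        have hby : Q b 0 = Q (y i0) 0 := by
          by_cases h : b = y i0
          · rw [h]
          · exact hQ01 b (y i0) (hB hb (hyB i0) h)
        have hxy0 : Q (x i0) 0 = Q (y i0) 0 := hQ01 _ _ (hadj i0)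
        rw [dotProduct, Fin.sum_univ_one]
        simp only [Pi.sub_apply]
        rw [hax, hby, hxy0]
        ring
    rw [rRow_dot pt hab q, ← hconv]
    exact main
  intro u hu v hv huv
  rcases hu with hu | hu <;> rcases hv with hv | hv
  · exact hA hu hv huv
  · exact key u hu v hv
  · exact (key v hv u hu).symm
  · exact hB hu hv huv
end

section
/- Let p, ε ∈ (0,1) be real numbers, let S be a finite set of m vectors in a real vector space with dim span_ℝ(S) ≤ D, and let S_p be the random subset of S containing each element of S independently with probability p. Then P(|{v ∈ S : v ∈ span_ℝ(S_p)}| < ε·m) ≤ P(X ≤ D), where X is a binomial random variable with parameters m and (1−ε)p. -/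
open MeasureTheory Filter Topology

noncomputable def bernoulliMeasure (p : ℝ) : Measure Bool :=
  ENNReal.ofReal p • Measure.dirac true + ENNReal.ofReal (1 - p) • Measure.dirac false

instance (p : ℝ) : IsFiniteMeasure (bernoulliMeasure p) := by
  constructor
  simp only [bernoulliMeasure, Measure.add_apply, Measure.smul_apply, smul_eq_mul,
    measure_univ, mul_one]
  exact ENNReal.add_lt_top.mpr ⟨ENNReal.ofReal_lt_top, ENNReal.ofReal_lt_top⟩

open Finset in
lemma _dummy_open : True := trivial

noncomputable def btail (τ : ℝ) (N d : ℕ) : ℝ :=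
  ∑ k ∈ Finset.range (d+1), (N.choose k : ℝ) * τ^k * (1-τ)^(N-k)

section tailLemmas
variable {τ : ℝ} (hτ0 : 0 ≤ τ) (hτ1 : τ ≤ 1)

include hτ0 hτ1 in
lemma btail_nonneg (N d : ℕ) : 0 ≤ btail τ N d := by
  apply Finset.sum_nonneg
  intro k _
  have h1 : (0:ℝ) ≤ 1 - τ := by linarith
  positivity

lemma btail_zero_trials (d : ℕ) : btail τ 0 d = 1 := by
  unfold btail
  rw [Finset.sum_eq_single 0]
  · simp
  · intro k _ hk
    rcases Nat.exists_eq_succ_of_ne_zero hk with ⟨j, rfl⟩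
    simp [Nat.choose_eq_zero_of_lt (Nat.succ_pos j)]
  · simp

lemma btail_cutoff_zero (N : ℕ) : btail τ N 0 = (1-τ)^N := by
  simp [btail]

lemma btail_pascal (N d : ℕ) :
    btail τ (N+1) (d+1) = τ * btail τ N d + (1-τ) * btail τ N (d+1) := by
  unfold btail
  rw [Finset.mul_sum, Finset.mul_sum]
  -- LHS = ∑_{k∈range(d+2)} C(N+1,k) τ^k (1-τ)^(N+1-k)
  -- split C(N+1,k) = C(N,k) + C(N,k-1)
  have key : ∀ k ∈ Finset.range (d+2),
      ((N+1).choose k : ℝ) * τ^k * (1-τ)^(N+1-k)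
      = ((N.choose k : ℝ) * τ^k * (1-τ)^(N+1-k))
        + ((if k = 0 then 0 else (N.choose (k-1) : ℝ) * τ^k * (1-τ)^(N+1-k))) := by
    intro k _
    rcases k with _ | j
    · simp
    · rw [if_neg (Nat.succ_ne_zero j)]
      rw [Nat.choose_succ_succ N j]
      push_cast
      have hs : N + 1 - (j+1) = N - j := by omega
      ring
  rw [Finset.sum_congr rfl key, Finset.sum_add_distrib]
  rw [add_comm]
  congr 1
  · -- shifted sum = ∑ τ * (...)
    rw [Finset.sum_range_succ']
    rw [if_pos rfl, add_zero]
    apply Finset.sum_congr rfl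
    intro k _
    rw [if_neg (Nat.succ_ne_zero k)]
    have h1 : k + 1 - 1 = k := rfl
    have h2 : N + 1 - (k+1) = N - k := by omega
    rw [h1, h2]
    ring
  · apply Finset.sum_congr rfl
    intro k _
    rcases le_or_gt k N with hk | hk
    · have : N + 1 - k = (N - k) + 1 := by omega
      rw [this, pow_succ]
      ring
    · rw [Nat.choose_eq_zero_of_lt hk]
      simp

lemma btail_mono_cutoff {τ : ℝ} (hτ0 : 0 ≤ τ) (hτ1 : τ ≤ 1) (N d : ℕ) :
    btail τ N d ≤ btail τ N (d+1) := by
  unfold btail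
  rw [Finset.sum_range_succ (n := d+1)]
  have h1 : (0:ℝ) ≤ 1 - τ := by linarith
  have : (0:ℝ) ≤ (N.choose (d+1) : ℝ) * τ^(d+1) * (1-τ)^(N-(d+1)) := by positivity
  linarith

lemma btail_mono_cutoff_le {τ : ℝ} (hτ0 : 0 ≤ τ) (hτ1 : τ ≤ 1) (N : ℕ) {d d' : ℕ}
    (h : d ≤ d') : btail τ N d ≤ btail τ N d' := by
  induction d' with
  | zero => simp_all
  | succ e ih =>
    rcases Nat.lt_or_ge d (e+1) with h' | h'
    · exact (ih (by omega)).trans (btail_mono_cutoff hτ0 hτ1 N e)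
    · have : d = e + 1 := by omega
      subst this
      rfl

lemma btail_le_one {τ : ℝ} (hτ0 : 0 ≤ τ) (hτ1 : τ ≤ 1) (N d : ℕ) :
    btail τ N d ≤ 1 := by
  induction N generalizing d with
  | zero => rw [btail_zero_trials]
  | succ M ih =>
    rcases d with _ | e
    · rw [btail_cutoff_zero]
      apply pow_le_one₀ (by linarith) (by linarith)
    · rw [btail_pascal]
      nlinarith [ih (d := e), ih (d := e+1)]

lemma btail_step_up {τ : ℝ} (hτ0 : 0 ≤ τ) (hτ1 : τ ≤ 1) (N d : ℕ) :
    btail τ N d ≤ btail τ (N+1) (d+1) := by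
  rw [btail_pascal]
  nlinarith [btail_mono_cutoff hτ0 hτ1 N d]

lemma btail_trials_mono {τ : ℝ} (hτ0 : 0 ≤ τ) (hτ1 : τ ≤ 1) (N d : ℕ) :
    btail τ (N+1) d ≤ btail τ N d := by
  rcases d with _ | e
  · rw [btail_cutoff_zero, btail_cutoff_zero, pow_succ]
    nlinarith [pow_nonneg (show (0:ℝ) ≤ 1-τ by linarith) N,
      pow_le_one₀ (show (0:ℝ) ≤ 1-τ by linarith) (show 1-τ ≤ 1 by linarith) (n := N)]
  · rw [btail_pascal]
    nlinarith [btail_mono_cutoff hτ0 hτ1 N e]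

lemma btail_eq_one_of_ge {τ : ℝ} (hτ0 : 0 ≤ τ) (hτ1 : τ ≤ 1) {N d : ℕ} (h : N ≤ d) :
    btail τ N d = 1 := by
  induction N generalizing d with
  | zero => exact btail_zero_trials d
  | succ M ih =>
    rcases d with _ | e
    · omega
    · rw [btail_pascal, ih (by omega), ih (by omega)]
      ring
noncomputable def Afn (τ : ℝ) (n t : ℕ) : ℝ := if t ≤ n then (1-τ)^t else 0
noncomputable def Vfn (τ : ℝ) (d n t : ℕ) : ℝ := if t < n then btail τ (n-1-t) d else 1

lemma Afn_zero (τ : ℝ) (n : ℕ) : Afn τ n 0 = 1 := by simp [Afn]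

lemma Afn_large (τ : ℝ) {n t : ℕ} (h : n < t) : Afn τ n t = 0 := by
  simp [Afn, Nat.not_le.mpr h]

lemma Afn_antitone {τ : ℝ} (hτ0 : 0 ≤ τ) (hτ1 : τ ≤ 1) (n : ℕ) (t : ℕ) :
    Afn τ n (t+1) ≤ Afn τ n t := by
  unfold Afn
  have h1 : (0:ℝ) ≤ 1 - τ := by linarith
  split_ifs with h2 h3 h3
  · rw [pow_succ]
    nlinarith [pow_nonneg h1 t, pow_le_one₀ h1 (by linarith : 1-τ ≤ 1) (n := t)]
  · omega
  · positivity
  · exact le_refl _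

lemma Afn_nonneg {τ : ℝ} (hτ1 : τ ≤ 1) (n t : ℕ) : 0 ≤ Afn τ n t := by
  unfold Afn
  have h1 : (0:ℝ) ≤ 1 - τ := by linarith
  split_ifs <;> positivity

lemma Afn_le_one {τ : ℝ} (hτ0 : 0 ≤ τ) (hτ1 : τ ≤ 1) (n t : ℕ) : Afn τ n t ≤ 1 := by
  unfold Afn
  split_ifs
  · exact pow_le_one₀ (by linarith) (by linarith)
  · linarith

lemma Vfn_nonneg {τ : ℝ} (hτ0 : 0 ≤ τ) (hτ1 : τ ≤ 1) (d n t : ℕ) : 0 ≤ Vfn τ d n t := by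
  unfold Vfn
  split_ifs
  · exact btail_nonneg hτ0 hτ1 _ _
  · norm_num

lemma Vfn_le_one {τ : ℝ} (hτ0 : 0 ≤ τ) (hτ1 : τ ≤ 1) (d n t : ℕ) : Vfn τ d n t ≤ 1 := by
  unfold Vfn
  split_ifs
  · exact btail_le_one hτ0 hτ1 _ _
  · norm_num

/-- first-success decomposition -/
lemma btail_decomp {τ : ℝ} (d : ℕ) : ∀ n K : ℕ, n + 1 ≤ K →
    btail τ n (d+1) = ∑ t ∈ Finset.range K, (Afn τ n t - Afn τ n (t+1)) * Vfn τ d n t := by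
  have base : ∀ n, btail τ n (d+1)
      = ∑ t ∈ Finset.range (n+1), (Afn τ n t - Afn τ n (t+1)) * Vfn τ d n t := by
    intro n
    induction n with
    | zero =>
      simp [Afn, Vfn, btail_zero_trials]
    | succ n ih =>
      rw [btail_pascal, Finset.sum_range_succ']
      have h0 : (Afn τ (n+1) 0 - Afn τ (n+1) (0+1)) * Vfn τ d (n+1) 0
          = τ * btail τ n d := by
        have : Afn τ (n+1) 1 = 1 - τ := by simp [Afn]
        rw [this, Afn_zero]
        have : Vfn τ d (n+1) 0 = btail τ n d := by simp [Vfn]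
        rw [this]; ring
      rw [h0]
      have hterm : ∀ i, (Afn τ (n+1) (i+1) - Afn τ (n+1) (i+1+1)) * Vfn τ d (n+1) (i+1)
          = (1-τ) * ((Afn τ n i - Afn τ n (i+1)) * Vfn τ d n i) := by
        intro i
        have hA : ∀ t, Afn τ (n+1) (t+1) = (1-τ) * Afn τ n t := by
          intro t
          unfold Afn
          split_ifs with h1 h2 h2
          · rw [pow_succ]; ring
          · omega
          · omega
          · ring
        have hV : Vfn τ d (n+1) (i+1) = Vfn τ d n i := by
          unfold Vfn
          have : n + 1 - 1 - (i+1) = n - 1 - i := by omega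
          rw [this]
          split_ifs with h1 h2 h2
          · rfl
          · omega
          · omega
          · rfl
        rw [hA, hA, hV]; ring
      calc τ * btail τ n d + (1-τ) * btail τ n (d+1)
          = τ * btail τ n d
            + (1-τ) * ∑ t ∈ Finset.range (n+1), (Afn τ n t - Afn τ n (t+1)) * Vfn τ d n t := by
            rw [← ih]
        _ = (∑ i ∈ Finset.range (n+1),
              (Afn τ (n+1) (i+1) - Afn τ (n+1) (i+1+1)) * Vfn τ d (n+1) (i+1))
            + τ * btail τ n d := by
            rw [Finset.mul_sum]
            rw [Finset.sum_congr rfl (fun i _ => hterm i)]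
            ring
  intro n K hK
  rw [base n]
  symm
  rw [← Finset.sum_range_add_sum_Ico _ hK]
  have : ∀ t ∈ Finset.Ico (n+1) K, (Afn τ n t - Afn τ n (t+1)) * Vfn τ d n t = 0 := by
    intro t ht
    rw [Finset.mem_Ico] at ht
    rw [Afn_large τ (by omega), Afn_large τ (by omega)]
    ring
  rw [Finset.sum_congr rfl this]
  simp

/-- interval clip identity -/
lemma clip_step {x y b b' : ℝ} (hyx : y ≤ x) (hbb : b' ≤ b) :
    max 0 (min x b - max y b') = max y (min x b) - max y (min x b') := by
  rcases le_total b' y with h1 | h1 <;> rcases le_total b y with h2 | h2 <;>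
    rcases le_total b x with h3 | h3 <;> rcases le_total b' x with h4 | h4 <;>
    rcases le_total 0 (min x b - max y b') with h5 | h5 <;>
    simp only [max_def, min_def] at * <;> split_ifs at * <;> linarith

lemma clip_marginal {x y : ℝ} (hyx : y ≤ x) (hx : x ≤ 1) (hy : 0 ≤ y) {B : ℕ → ℝ}
    (hB : ∀ t, B (t+1) ≤ B t) {K : ℕ} (hB0 : B 0 = 1) (hBK : B K = 0) :
    ∑ t' ∈ Finset.range K, max 0 (min x (B t') - max y (B (t'+1))) = x - y := by
  have : ∀ t' ∈ Finset.range K, max 0 (min x (B t') - max y (B (t'+1)))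
      = (fun z => max y (min x z)) (B t') - (fun z => max y (min x z)) (B (t'+1)) := by
    intro t' _
    exact clip_step hyx (hB t')
  rw [Finset.sum_congr rfl this, Finset.sum_range_sub']
  rw [hB0, hBK]
  simp only []
  rw [min_eq_left hx, max_eq_right hyx, min_eq_right (hy.trans hyx), max_eq_left hy]
/-- Key binomial tail comparison: if (1-p)^n ≤ (1-q)^m (1-p)^d then
    P(Bin(n,p) ≤ d) ≤ P(Bin(m,q) ≤ d). -/
lemma btail_compare {p q : ℝ} (hp0 : 0 < p) (hp1 : p < 1) (hq0 : 0 < q) (hq1 : q < 1) :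
    ∀ d n m : ℕ, (1-p)^n ≤ (1-q)^m * (1-p)^d → btail p n d ≤ btail q m d := by
  have hp0' : (0:ℝ) ≤ p := hp0.le
  have hp1' : p ≤ 1 := hp1.le
  have hq0' : (0:ℝ) ≤ q := hq0.le
  have hq1' : q ≤ 1 := hq1.le
  have hu0 : (0:ℝ) < 1 - p := by linarith
  have hμ0 : (0:ℝ) < 1 - q := by linarith
  have hμ1 : 1 - q < 1 := by linarith
  intro d
  induction d with
  | zero =>
    intro n m h
    rw [btail_cutoff_zero, btail_cutoff_zero]
    simpa using h
  | succ d ih =>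
    intro n m hyp
    set K := n + m + 2 with hK
    set Ap : ℕ → ℝ := Afn p n with hAp
    set Bq : ℕ → ℝ := Afn q m with hBq
    set c : ℕ → ℕ → ℝ := fun t t' => max 0 (min (Ap t) (Bq t') - max (Ap (t+1)) (Bq (t'+1)))
      with hc
    have hApanti : ∀ t, Ap (t+1) ≤ Ap t := fun t => Afn_antitone hp0' hp1' n t
    have hBqanti : ∀ t, Bq (t+1) ≤ Bq t := fun t => Afn_antitone hq0' hq1' m t
    have hApnn : ∀ t, 0 ≤ Ap t := fun t => Afn_nonneg hp1' n t
    have hBqnn : ∀ t, 0 ≤ Bq t := fun t => Afn_nonneg hq1' m t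
    have hAp1 : ∀ t, Ap t ≤ 1 := fun t => Afn_le_one hp0' hp1' n t
    have hBq1 : ∀ t, Bq t ≤ 1 := fun t => Afn_le_one hq0' hq1' m t
    -- marginals
    have margA : ∀ t, ∑ t' ∈ Finset.range K, c t t' = Ap t - Ap (t+1) := by
      intro t
      exact clip_marginal (hApanti t) (hAp1 t) (hApnn (t+1)) hBqanti
        (Afn_zero q m) (Afn_large q (by omega))
    have margB : ∀ t', ∑ t ∈ Finset.range K, c t t' = Bq t' - Bq (t'+1) := by
      intro t'
      have : ∀ t, c t t' = max 0 (min (Bq t') (Ap t) - max (Bq (t'+1)) (Ap (t+1))) := by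
        intro t
        rw [hc]
        simp only [min_comm, max_comm (Ap (t+1))]
      rw [Finset.sum_congr rfl (fun t _ => this t)]
      exact clip_marginal (hBqanti t') (hBq1 t') (hBqnn (t'+1)) hApanti
        (Afn_zero p n) (Afn_large p (by omega))
    -- expansions
    have lhs_eq : btail p n (d+1)
        = ∑ t ∈ Finset.range K, ∑ t' ∈ Finset.range K, c t t' * Vfn p d n t := by
      rw [btail_decomp d n K (by omega)]
      apply Finset.sum_congr rfl
      intro t _
      rw [← Finset.sum_mul, margA]
    have rhs_eq : btail q m (d+1)
        = ∑ t ∈ Finset.range K, ∑ t' ∈ Finset.range K, c t t' * Vfn q d m t' := by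
      rw [btail_decomp d m K (by omega)]
      rw [Finset.sum_comm]
      apply Finset.sum_congr rfl
      intro t' _
      rw [← Finset.sum_mul, margB]
    rw [lhs_eq, rhs_eq]
    apply Finset.sum_le_sum
    intro t _
    apply Finset.sum_le_sum
    intro t' _
    -- pointwise comparison
    rcases le_or_gt (c t t') 0 with hcle | hcpos
    · have : c t t' = 0 := le_antisymm hcle (le_max_left 0 _)
      rw [this]; ring_nf; exact le_refl 0
    · apply mul_le_mul_of_nonneg_left _ hcpos.le
      -- from positivity extract overlap facts
      have hover : max (Ap (t+1)) (Bq (t'+1)) < min (Ap t) (Bq t') := by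
        by_contra hcon
        push_neg at hcon
        have : c t t' = 0 := by
          rw [hc]
          simp only [max_eq_left (by linarith : min (Ap t) (Bq t') - max (Ap (t+1)) (Bq (t'+1)) ≤ 0)]
        rw [this] at hcpos; exact lt_irrefl 0 hcpos
      have hBlt : Bq (t'+1) < Ap t :=
        lt_of_le_of_lt (le_max_right _ _) (lt_of_lt_of_le hover (min_le_left _ _))
      have hApt_pos : 0 < Ap t := lt_of_le_of_lt (hBqnn (t'+1)) hBlt
      have htn : t ≤ n := by
        by_contra hcon
        push_neg at hcon
        have h0 : Ap t = 0 := by rw [hAp]; exact Afn_large p hcon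
        rw [h0] at hApt_pos
        exact lt_irrefl 0 hApt_pos
      have hApt : Ap t = (1-p)^t := by simp [hAp, Afn, htn]
      -- case t' ≥ m : Vq = 1
      rcases le_or_gt m t' with hmt' | ht'm
      · have : Vfn q d m t' = 1 := by unfold Vfn; rw [if_neg (by omega)]
        rw [this]
        exact Vfn_le_one hp0' hp1' d n t
      · -- t' < m; show t < n
        have hBt' : Bq (t'+1) = (1-q)^(t'+1) := by
          have h9 : t'+1 ≤ m := by omega
          simp [hBq, Afn, h9]
        have htln : t < n := by
          rcases lt_or_eq_of_le htn with h | h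
          · exact h
          · exfalso
            -- t = n : contradiction with hyp
            rw [← h] at hyp
            rw [hBt', hApt] at hBlt
            -- (1-q)^(t'+1) < (1-p)^t ≤ (1-q)^m (1-p)^(d+1) ≤ (1-q)^m
            have h1 : (1-p)^t ≤ (1-q)^m := by
              calc (1-p)^t ≤ (1-q)^m * (1-p)^(d+1) := hyp
                _ ≤ (1-q)^m * 1 := by
                    apply mul_le_mul_of_nonneg_left _ (pow_nonneg hμ0.le m)
                    exact pow_le_one₀ hu0.le (by linarith)
                _ = (1-q)^m := mul_one _
            have h2 : (1-q)^m ≤ (1-q)^(t'+1) :=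
              pow_le_pow_of_le_one hμ0.le hμ1.le (by omega)
            linarith
        have hVp : Vfn p d n t = btail p (n-1-t) d := by unfold Vfn; rw [if_pos htln]
        have hVq : Vfn q d m t' = btail q (m-1-t') d := by unfold Vfn; rw [if_pos ht'm]
        rw [hVp, hVq]
        apply ih
        -- need : (1-p)^(n-1-t) ≤ (1-q)^(m-1-t') * (1-p)^d
        rw [hBt', hApt] at hBlt
        have e1 : (1-p)^(n-1-t) * (1-p)^(t+1) = (1-p)^n := by
          rw [← pow_add]; congr 1; omega
        have e2 : (1-q)^(m-1-t') * (1-q)^(t'+1) = (1-q)^m := by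
          rw [← pow_add]; congr 1; omega
        have hut1 : (0:ℝ) < (1-p)^(t+1) := pow_pos hu0 _
        rw [← mul_le_mul_iff_of_pos_right hut1]
        calc (1-p)^(n-1-t) * (1-p)^(t+1) = (1-p)^n := e1
          _ ≤ (1-q)^m * (1-p)^(d+1) := hyp
          _ = (1-q)^(m-1-t') * (1-q)^(t'+1) * (1-p)^(d+1) := by rw [e2]
          _ ≤ (1-q)^(m-1-t') * (1-p)^t * (1-p)^(d+1) := by
              apply mul_le_mul_of_nonneg_right _ (pow_nonneg hu0.le _)
              exact mul_le_mul_of_nonneg_left hBlt.le (pow_nonneg hμ0.le _)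
          _ = (1-q)^(m-1-t') * (1-p)^d * (1-p)^(t+1) := by
              rw [pow_succ]; ring
noncomputable def Phi (p : ℝ) (m s D : ℕ) : ℝ := btail p (m - (s - D)) (min D s)

section PhiLemmas
variable {p : ℝ} (hp0 : 0 ≤ p) (hp1 : p ≤ 1)

lemma Phi_zero (s D : ℕ) : Phi p 0 s D = 1 := by
  unfold Phi
  rw [Nat.zero_sub, btail_zero_trials]

lemma Phi_nonneg (hp0 : 0 ≤ p) (hp1 : p ≤ 1) (m s D : ℕ) : 0 ≤ Phi p m s D :=
  btail_nonneg hp0 hp1 _ _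

include hp0 hp1 in
lemma Phi_stale (m s D : ℕ) : Phi p m s D ≤ Phi p (m+1) (s+1) D := by
  unfold Phi
  rcases le_or_gt D s with h | h
  · have h1 : min D (s+1) = D := by omega
    have h2 : min D s = D := by omega
    have h3 : m + 1 - (s + 1 - D) = m - (s - D) := by omega
    rw [h1, h2, h3]
  · have h1 : min D (s+1) = min D (s+1) := rfl
    have h2 : min D s = s := by omega
    have h3 : s - D = 0 := by omega
    have h4 : s + 1 - D = 0 := by omega
    rw [h2, h3, h4]
    simp only [Nat.sub_zero]
    rcases le_or_gt D (s+1) with h5 | h5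
    · have : min D (s+1) = D := by omega
      rw [this]
      have hD : D = s + 1 := by omega
      rw [hD]
      exact btail_step_up hp0 hp1 m s
    · have : min D (s+1) = s+1 := by omega
      rw [this]
      exact btail_step_up hp0 hp1 m s

lemma Phi_fresh (m s D : ℕ) :
    p * Phi p m s D + (1-p) * Phi p m (s+1) (D+1) ≤ Phi p (m+1) (s+1) (D+1) := by
  unfold Phi
  have h1 : min (D+1) (s+1) = (min D s) + 1 := by omega
  have h2 : s + 1 - (D + 1) = s - D := by omega
  rw [h1, h2]
  rcases le_or_gt (s - D) m with h | h
  · have h3 : m + 1 - (s - D) = (m - (s - D)) + 1 := by omega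
    rw [h3, btail_pascal]
  · have h3 : m + 1 - (s - D) = 0 := by omega
    have h4 : m - (s - D) = 0 := by omega
    rw [h3, h4]
    simp only [btail_zero_trials]
    linarith

include hp0 hp1 in
lemma Phi_fresh_szero (m D : ℕ) :
    (1-p) * Phi p m 0 D ≤ Phi p (m+1) 0 D := by
  unfold Phi
  simp only [Nat.zero_sub, Nat.sub_zero, Nat.min_zero]
  rw [btail_cutoff_zero, btail_cutoff_zero, pow_succ]
  ring_nf
  exact le_refl _

include hp0 hp1 in
lemma Phi_fresh_Dzero (m s : ℕ) :
    (1-p) * Phi p m (s+1) 0 ≤ Phi p (m+1) (s+1) 0 := by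
  unfold Phi
  simp only [Nat.zero_min, Nat.sub_zero]
  rw [btail_cutoff_zero, btail_cutoff_zero]
  rcases le_or_gt (s+1) m with h | h
  · have h1 : m + 1 - (s + 1) = (m - (s+1)) + 1 := by omega
    rw [h1, pow_succ]
    ring_nf
    exact le_refl _
  · have h1 : m - (s+1) = 0 := by omega
    rw [h1]
    have h2 : (1-p)^(m+1-(s+1)) ≥ (1-p)^1 := by
      apply pow_le_pow_of_le_one (by linarith) (by linarith)
      omega
    simpa using h2

end PhiLemmas

/-- key power inequality : s < εm  ⟹  (1-p)^(m-s) ≤ (1-(1-ε)p)^m -/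
lemma key_pow {p ε : ℝ} (hp : p ∈ Set.Ioo (0:ℝ) 1) (hε : ε ∈ Set.Ioo (0:ℝ) 1)
    {m s : ℕ} (hs : (s:ℝ) < ε * m) :
    (1-p)^(m-s) ≤ (1-(1-ε)*p)^m := by
  obtain ⟨hp0, hp1⟩ := hp
  obtain ⟨hε0, hε1⟩ := hε
  have hu0 : (0:ℝ) < 1 - p := by linarith
  have hu1 : 1 - p ≤ 1 := by linarith
  -- (1-p)^(1-ε) ≤ 1-(1-ε)p  by weighted AM-GM
  have amgm : (1-p) ^ (1-ε) ≤ 1 - (1-ε)*p := by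
    have := Real.geom_mean_le_arith_mean2_weighted
      (by linarith : (0:ℝ) ≤ 1-ε) (le_of_lt hε0) hu0.le (by norm_num : (0:ℝ) ≤ 1)
      (by ring : (1-ε) + ε = 1)
    calc (1-p) ^ (1-ε) = (1-p) ^ (1-ε) * 1 ^ ε := by rw [Real.one_rpow, mul_one]
      _ ≤ (1-ε) * (1-p) + ε * 1 := this
      _ = 1 - (1-ε)*p := by ring
  have hsm : s ≤ m := by
    by_contra hcon
    push_neg at hcon
    have : (m:ℝ) < (s:ℝ) := by exact_mod_cast hcon
    nlinarith [Nat.cast_nonneg (α := ℝ) m]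
  -- (1-p)^(m-s) ≤ ((1-p)^(1-ε))^m
  have step1 : (1-p)^(m-s) ≤ ((1-p) ^ (1-ε)) ^ (m:ℕ) := by
    have e1 : (1-p)^(m-s) = (1-p) ^ (((m-s : ℕ) : ℝ)) := by
      rw [Real.rpow_natCast]
    have e2 : ((1-p) ^ (1-ε)) ^ (m:ℕ) = (1-p) ^ ((1-ε) * m) := by
      rw [← Real.rpow_natCast ((1-p) ^ (1-ε)) m, ← Real.rpow_mul hu0.le]
    rw [e1, e2]
    apply Real.rpow_le_rpow_of_exponent_ge hu0 hu1
    have : ((m - s : ℕ) : ℝ) = (m:ℝ) - (s:ℝ) := by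
      rw [Nat.cast_sub hsm]
    rw [this]
    nlinarith
  calc (1-p)^(m-s) ≤ ((1-p) ^ (1-ε)) ^ (m:ℕ) := step1
    _ ≤ (1-(1-ε)*p)^m := by
        apply pow_le_pow_left₀ (Real.rpow_nonneg hu0.le _) amgm
  
/-- the final certificate bound -/
lemma Phi_le_btail {p ε : ℝ} (hp : p ∈ Set.Ioo (0:ℝ) 1) (hε : ε ∈ Set.Ioo (0:ℝ) 1)
    {m s : ℕ} (hs : (s:ℝ) < ε * m) (D : ℕ) :
    Phi p m s D ≤ btail ((1-ε)*p) m D := by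
  obtain ⟨hp0, hp1⟩ := hp
  obtain ⟨hε0, hε1⟩ := hε
  set q := (1-ε)*p with hq
  have hq0 : 0 < q := by rw [hq]; nlinarith
  have hq1 : q < 1 := by rw [hq]; nlinarith
  have hsm : s ≤ m := by
    by_contra hcon
    push_neg at hcon
    have : (m:ℝ) < (s:ℝ) := by exact_mod_cast hcon
    nlinarith [Nat.cast_nonneg (α := ℝ) m]
  have key : (1-p)^(m-s) ≤ (1-q)^m := key_pow ⟨hp0,hp1⟩ ⟨hε0,hε1⟩ hs
  unfold Phi
  have step : btail p (m - (s - D)) (min D s) ≤ btail q m (min D s) := by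
    apply btail_compare hp0 hp1 hq0 hq1
    rcases le_or_gt D s with h | h
    · have h1 : min D s = D := by omega
      have h2 : m - (s - D) = (m - s) + D := by omega
      rw [h1, h2, pow_add]
      exact mul_le_mul_of_nonneg_right key (pow_nonneg (by linarith) D)
    · have h1 : min D s = s := by omega
      have h2 : s - D = 0 := by omega
      rw [h1, h2]
      simp only [Nat.sub_zero]
      have h3 : (1-p)^m = (1-p)^(m-s) * (1-p)^s := by
        rw [← pow_add]; congr 1; omega
      rw [h3]
      exact mul_le_mul_of_nonneg_right key (pow_nonneg (by linarith) s)
  exact step.trans (btail_mono_cutoff_le hq0.le hq1.le m (by omega))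
open scoped Classical

section MainInduction

variable {E : Type} [AddCommGroup E] [Module ℝ E]

/-- staleness: `vec i` lies in `W ⊔ span of earlier chosen vectors` -/
def staleP {m : ℕ} (vec : Fin m → E) (W : Submodule ℝ E) (g : Fin m → Bool) (i : Fin m) : Prop :=
  vec i ∈ W ⊔ Submodule.span ℝ (vec '' {j | j < i ∧ g j = true})

noncomputable def badN {m : ℕ} (vec : Fin m → E) (W : Submodule ℝ E) (g : Fin m → Bool) : ℕ :=
  ∑ i : Fin m, (if staleP vec W g i ∨ g i = true then 1 else 0)

noncomputable def ftN {m : ℕ} (vec : Fin m → E) (W : Submodule ℝ E) (g : Fin m → Bool) : ℕ :=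
  ∑ i : Fin m, (if g i = true ∧ ¬ staleP vec W g i then 1 else 0)

noncomputable def wt (p : ℝ) {m : ℕ} (g : Fin m → Bool) : ℝ :=
  ∏ i : Fin m, (if g i then p else 1-p)

noncomputable def SS (p : ℝ) {m : ℕ} (vec : Fin m → E) (W : Submodule ℝ E) (s D : ℕ) : ℝ :=
  ∑ g : Fin m → Bool, (if badN vec W g ≤ s ∧ ftN vec W g ≤ D then wt p g else 0)

lemma span_set_cons {m : ℕ} (vec : Fin (m+1) → E) (b : Bool) (g' : Fin m → Bool) (i : Fin m) :
    vec '' {j | j < i.succ ∧ (Fin.cons b g' : Fin (m+1) → Bool) j = true}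
    = (if b then {vec 0} else ∅) ∪ ((vec ∘ Fin.succ) '' {j | j < i ∧ g' j = true}) := by
  ext x
  constructor
  · rintro ⟨j, ⟨hj1, hj2⟩, rfl⟩
    rcases Fin.eq_zero_or_eq_succ j with rfl | ⟨j', rfl⟩
    · left
      rw [Fin.cons_zero] at hj2
      rw [hj2]
      simp
    · right
      rw [Fin.cons_succ] at hj2
      exact ⟨j', ⟨by exact Fin.succ_lt_succ_iff.mp hj1, hj2⟩, rfl⟩
  · rintro (hx | ⟨j', ⟨hj1, hj2⟩, rfl⟩)
    · rcases b with _|_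
      · simp at hx
      · simp at hx
        exact ⟨0, ⟨Fin.succ_pos i, by rw [Fin.cons_zero]⟩, hx.symm⟩
    · exact ⟨j'.succ, ⟨Fin.succ_lt_succ_iff.mpr hj1, by rw [Fin.cons_succ]; exact hj2⟩, rfl⟩

lemma staleP_succ {m : ℕ} (vec : Fin (m+1) → E) (W : Submodule ℝ E) (b : Bool)
    (g' : Fin m → Bool) (i : Fin m) :
    staleP vec W (Fin.cons b g') i.succ
    ↔ staleP (vec ∘ Fin.succ) (W ⊔ (if b then Submodule.span ℝ {vec 0} else ⊥)) g' i := by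
  unfold staleP
  rw [span_set_cons]
  rw [Submodule.span_union]
  constructor
  · intro h
    convert h using 1
    rcases b with _|_
    · simp [Submodule.span_empty, sup_assoc]
    · simp [sup_assoc]
    rfl
  · intro h
    convert h using 1
    rcases b with _|_
    · simp [Submodule.span_empty, sup_assoc]
    · simp [sup_assoc]
    rfl

lemma staleP_zero {m : ℕ} (vec : Fin (m+1) → E) (W : Submodule ℝ E) (b : Bool)
    (g' : Fin m → Bool) :
    staleP vec W (Fin.cons b g') 0 ↔ vec 0 ∈ W := by
  unfold staleP
  have : {j : Fin (m+1) | j < 0 ∧ (Fin.cons b g' : Fin (m+1) → Bool) j = true} = ∅ := by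
    ext j
    simp [Fin.not_lt_zero]
  rw [this]
  simp [Submodule.span_empty]

lemma wt_cons (p : ℝ) {m : ℕ} (b : Bool) (g' : Fin m → Bool) :
    wt p (Fin.cons b g' : Fin (m+1) → Bool) = (if b then p else 1-p) * wt p g' := by
  unfold wt
  rw [Fin.prod_univ_succ]
  simp only [Fin.cons_zero, Fin.cons_succ]

lemma badN_cons {m : ℕ} (vec : Fin (m+1) → E) (W : Submodule ℝ E) (b : Bool)
    (g' : Fin m → Bool) :
    badN vec W (Fin.cons b g')
    = (if vec 0 ∈ W ∨ b = true then 1 else 0)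
      + badN (vec ∘ Fin.succ) (W ⊔ (if b then Submodule.span ℝ {vec 0} else ⊥)) g' := by
  unfold badN
  rw [Fin.sum_univ_succ]
  congr 1
  · simp only [Fin.cons_zero]
    congr 1
    rw [eq_iff_iff]
    rw [staleP_zero]
  · apply Finset.sum_congr rfl
    intro i _
    congr 1
    rw [eq_iff_iff]
    rw [staleP_succ]
    simp only [Fin.cons_succ, Function.comp_apply]

lemma ftN_cons {m : ℕ} (vec : Fin (m+1) → E) (W : Submodule ℝ E) (b : Bool)
    (g' : Fin m → Bool) :
    ftN vec W (Fin.cons b g')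
    = (if b = true ∧ ¬ (vec 0 ∈ W) then 1 else 0)
      + ftN (vec ∘ Fin.succ) (W ⊔ (if b then Submodule.span ℝ {vec 0} else ⊥)) g' := by
  unfold ftN
  rw [Fin.sum_univ_succ]
  congr 1
  · simp only [Fin.cons_zero]
    congr 1
    rw [eq_iff_iff]
    rw [staleP_zero]
  · apply Finset.sum_congr rfl
    intro i _
    congr 1
    rw [eq_iff_iff]
    rw [staleP_succ]
    simp only [Fin.cons_succ, Function.comp_apply]

lemma sum_pi_bool_succ {m : ℕ} (F : (Fin (m+1) → Bool) → ℝ) :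
    ∑ g : Fin (m+1) → Bool, F g = ∑ b : Bool, ∑ g' : Fin m → Bool, F (Fin.cons b g') := by
  rw [← (Fin.consEquiv (fun _ : Fin (m+1) => Bool)).sum_comp F]
  rw [Fintype.sum_prod_type]
  rfl

lemma SS_le_Phi {p : ℝ} (hp0 : 0 ≤ p) (hp1 : p ≤ 1) :
    ∀ (m : ℕ) (vec : Fin m → E) (W : Submodule ℝ E) (s D : ℕ),
    SS p vec W s D ≤ Phi p m s D := by
  intro m
  induction m with
  | zero =>
    intro vec W s D
    rw [Phi_zero]
    unfold SS
    rw [Fintype.sum_eq_single (fun (i : Fin 0) => true)]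
    · have : badN vec W (fun _ => true) = 0 := by unfold badN; simp
      have h2 : ftN vec W (fun _ => true) = 0 := by unfold ftN; simp
      rw [this, h2]
      simp only [Nat.zero_le, and_self, if_true]
      unfold wt
      simp
    · intro g hg
      exact absurd (funext fun i => i.elim0) hg
  | succ m ih =>
    intro vec W s D
    unfold SS
    rw [sum_pi_bool_succ]
    -- abbreviations
    set WVt := W ⊔ Submodule.span ℝ {vec 0} with hWVt
    have hWf : (W ⊔ (if false then Submodule.span ℝ {vec 0} else ⊥)) = W := by simp
    have hWt : (W ⊔ (if true then Submodule.span ℝ {vec 0} else ⊥)) = W ⊔ Submodule.span ℝ {vec 0} := by simp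
    by_cases hst : vec 0 ∈ W
    · -- stale first coordinate
      rcases s with _ | s'
      · -- s = 0 : all terms vanish
        have : ∀ b : Bool, ∀ g' : Fin m → Bool,
            (if badN vec W (Fin.cons b g') ≤ 0 ∧ ftN vec W (Fin.cons b g') ≤ D
             then wt p (Fin.cons b g') else 0) = 0 := by
          intro b g'
          rw [if_neg]
          rintro ⟨h1, -⟩
          rw [badN_cons, if_pos (Or.inl hst)] at h1
          omega
        calc ∑ b : Bool, ∑ g' : Fin m → Bool, _ = (0:ℝ) := by
              apply Finset.sum_eq_zero
              intro b _
              apply Finset.sum_eq_zero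
              intro g' _
              exact this b g'
          _ ≤ Phi p (m+1) 0 D := Phi_nonneg hp0 hp1 _ _ _
      · -- s = s'+1
        have hterm : ∀ b : Bool, ∀ g' : Fin m → Bool,
            (if badN vec W (Fin.cons b g') ≤ s'+1 ∧ ftN vec W (Fin.cons b g') ≤ D
             then wt p (Fin.cons b g') else 0)
            = (if b then p else 1-p) *
              (if badN (vec ∘ Fin.succ) (W ⊔ (if b then Submodule.span ℝ {vec 0} else ⊥)) g' ≤ s'
                  ∧ ftN (vec ∘ Fin.succ) (W ⊔ (if b then Submodule.span ℝ {vec 0} else ⊥)) g' ≤ D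
               then wt p g' else 0) := by
          intro b g'
          rw [badN_cons, ftN_cons, wt_cons]
          rw [if_pos (Or.inl hst)]
          have hft0 : (if b = true ∧ ¬ (vec 0 ∈ W) then 1 else 0) = 0 := by
            rw [if_neg]; rintro ⟨-, h⟩; exact h hst
          rw [hft0]
          have hcond : (1 + badN (vec ∘ Fin.succ) (W ⊔ (if b then Submodule.span ℝ {vec 0} else ⊥)) g' ≤ s'+1
              ∧ 0 + ftN (vec ∘ Fin.succ) (W ⊔ (if b then Submodule.span ℝ {vec 0} else ⊥)) g' ≤ D)
              ↔ (badN (vec ∘ Fin.succ) (W ⊔ (if b then Submodule.span ℝ {vec 0} else ⊥)) g' ≤ s'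
              ∧ ftN (vec ∘ Fin.succ) (W ⊔ (if b then Submodule.span ℝ {vec 0} else ⊥)) g' ≤ D) := by
            omega
          rw [if_congr hcond rfl rfl, mul_ite, mul_zero]
        calc (∑ b : Bool, ∑ g' : Fin m → Bool,
                if badN vec W (Fin.cons b g') ≤ s'+1 ∧ ftN vec W (Fin.cons b g') ≤ D
                then wt p (Fin.cons b g') else 0)
            = p * SS p (vec ∘ Fin.succ) (W ⊔ Submodule.span ℝ {vec 0}) s' D
              + (1-p) * SS p (vec ∘ Fin.succ) W s' D := by
              rw [Fintype.sum_bool]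
              rw [Finset.sum_congr rfl (fun g' _ => hterm true g'),
                  Finset.sum_congr rfl (fun g' _ => hterm false g')]
              simp only [if_true, hWf, hWt, Bool.false_eq_true, if_false, sup_bot_eq]
              unfold SS
              rw [Finset.mul_sum, Finset.mul_sum]
          _ ≤ p * Phi p m s' D + (1-p) * Phi p m s' D := by
              apply add_le_add
              · exact mul_le_mul_of_nonneg_left (ih _ _ _ _) hp0
              · exact mul_le_mul_of_nonneg_left (ih _ _ _ _) (by linarith)
          _ = Phi p m s' D := by ring
          _ ≤ Phi p (m+1) (s'+1) D := Phi_stale hp0 hp1 m s' D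
    · -- fresh first coordinate
      have hbadt : ∀ g' : Fin m → Bool, badN vec W (Fin.cons true g')
          = 1 + badN (vec ∘ Fin.succ) WVt g' := by
        intro g'
        rw [badN_cons, if_pos (Or.inr rfl)]
        simp [hWVt]
      have hbadf : ∀ g' : Fin m → Bool, badN vec W (Fin.cons false g')
          = badN (vec ∘ Fin.succ) W g' := by
        intro g'
        rw [badN_cons, if_neg]
        · simp
        · rintro (h | h)
          · exact hst h
          · simp at h
      have hftt : ∀ g' : Fin m → Bool, ftN vec W (Fin.cons true g')
          = 1 + ftN (vec ∘ Fin.succ) WVt g' := by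
        intro g'
        rw [ftN_cons, if_pos ⟨rfl, hst⟩]
        simp [hWVt]
      have hftf : ∀ g' : Fin m → Bool, ftN vec W (Fin.cons false g')
          = ftN (vec ∘ Fin.succ) W g' := by
        intro g'
        rw [ftN_cons, if_neg]
        · simp
        · rintro ⟨h, -⟩
          simp at h
      have hwt : ∀ g' : Fin m → Bool, wt p (Fin.cons true g' : Fin (m+1) → Bool) = p * wt p g' := by
        intro g'; rw [wt_cons]; simp
      have hwf : ∀ g' : Fin m → Bool, wt p (Fin.cons false g' : Fin (m+1) → Bool) = (1-p) * wt p g' := by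
        intro g'; rw [wt_cons]; simp
      rw [Fintype.sum_bool]
      have hfalse : (∑ g' : Fin m → Bool,
          if badN vec W (Fin.cons false g') ≤ s ∧ ftN vec W (Fin.cons false g') ≤ D
          then wt p (Fin.cons false g') else 0)
          = (1-p) * SS p (vec ∘ Fin.succ) W s D := by
        unfold SS
        rw [Finset.mul_sum]
        apply Finset.sum_congr rfl
        intro g' _
        rw [hbadf, hftf, hwf, mul_ite, mul_zero]
      rcases s with _ | s'
      · -- s = 0 : true branch vanishes
        have htrue : (∑ g' : Fin m → Bool,
            if badN vec W (Fin.cons true g') ≤ 0 ∧ ftN vec W (Fin.cons true g') ≤ D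
            then wt p (Fin.cons true g') else 0) = 0 := by
          apply Finset.sum_eq_zero
          intro g' _
          rw [if_neg]
          rintro ⟨h1, -⟩
          rw [hbadt] at h1
          omega
        rw [htrue, hfalse, zero_add]
        calc (1-p) * SS p (vec ∘ Fin.succ) W 0 D
            ≤ (1-p) * Phi p m 0 D :=
              mul_le_mul_of_nonneg_left (ih _ _ _ _) (by linarith)
          _ ≤ Phi p (m+1) 0 D := Phi_fresh_szero hp0 hp1 m D
      · rcases D with _ | D'
        · -- D = 0 : true branch vanishes
          have htrue : (∑ g' : Fin m → Bool,
              if badN vec W (Fin.cons true g') ≤ s'+1 ∧ ftN vec W (Fin.cons true g') ≤ 0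
              then wt p (Fin.cons true g') else 0) = 0 := by
            apply Finset.sum_eq_zero
            intro g' _
            rw [if_neg]
            rintro ⟨-, h2⟩
            rw [hftt] at h2
            omega
          rw [htrue, hfalse, zero_add]
          calc (1-p) * SS p (vec ∘ Fin.succ) W (s'+1) 0
              ≤ (1-p) * Phi p m (s'+1) 0 :=
                mul_le_mul_of_nonneg_left (ih _ _ _ _) (by linarith)
            _ ≤ Phi p (m+1) (s'+1) 0 := Phi_fresh_Dzero hp0 hp1 m s'
        · -- s = s'+1, D = D'+1 : Pascal
          have htrue : (∑ g' : Fin m → Bool,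
              if badN vec W (Fin.cons true g') ≤ s'+1 ∧ ftN vec W (Fin.cons true g') ≤ D'+1
              then wt p (Fin.cons true g') else 0)
              = p * SS p (vec ∘ Fin.succ) WVt s' D' := by
            unfold SS
            rw [Finset.mul_sum]
            apply Finset.sum_congr rfl
            intro g' _
            rw [hbadt, hftt, hwt]
            have hcond : (1 + badN (vec ∘ Fin.succ) WVt g' ≤ s'+1
                ∧ 1 + ftN (vec ∘ Fin.succ) WVt g' ≤ D'+1)
                ↔ (badN (vec ∘ Fin.succ) WVt g' ≤ s' ∧ ftN (vec ∘ Fin.succ) WVt g' ≤ D') := by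
              omega
            rw [if_congr hcond rfl rfl, mul_ite, mul_zero]
          rw [htrue, hfalse]
          calc p * SS p (vec ∘ Fin.succ) WVt s' D'
                + (1-p) * SS p (vec ∘ Fin.succ) W (s'+1) (D'+1)
              ≤ p * Phi p m s' D' + (1-p) * Phi p m (s'+1) (D'+1) := by
                apply add_le_add
                · exact mul_le_mul_of_nonneg_left (ih _ _ _ _) hp0
                · exact mul_le_mul_of_nonneg_left (ih _ _ _ _) (by linarith)
            _ ≤ Phi p (m+1) (s'+1) (D'+1) := Phi_fresh m s' D'

end MainInduction
section EventLemmas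

variable {E : Type} [AddCommGroup E] [Module ℝ E]

lemma badN_le_ncard {m : ℕ} (vec : Fin m → E) (g : Fin m → Bool) :
    badN vec ⊥ g
    ≤ (Finset.univ.filter
        (fun i => vec i ∈ Submodule.span ℝ (vec '' {j | g j = true}))).card := by
  have : badN vec ⊥ g = (Finset.univ.filter
      (fun i => staleP vec ⊥ g i ∨ g i = true)).card := by
    unfold badN
    rw [Finset.card_filter]
  rw [this]
  apply Finset.card_le_card
  intro i hi
  rw [Finset.mem_filter] at hi ⊢
  refine ⟨Finset.mem_univ i, ?_⟩
  rcases hi.2 with h | h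
  · unfold staleP at h
    rw [bot_sup_eq] at h
    refine Submodule.span_mono ?_ h
    apply Set.image_mono
    intro j hj
    exact hj.2
  · exact Submodule.subset_span ⟨i, h, rfl⟩

lemma li_of_fresh {m : ℕ} (vec : Fin m → E) (g : Fin m → Bool) :
    ∀ (T : Finset (Fin m)),
    (∀ i ∈ T, g i = true ∧ vec i ∉ Submodule.span ℝ (vec '' {j | j < i ∧ g j = true})) →
    LinearIndependent ℝ (fun x : (vec '' (T : Set (Fin m))) => (x : E)) := by
  intro T
  induction T using Finset.strongInductionOn with
  | _ T ihT =>
    intro hT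
    rcases Finset.eq_empty_or_nonempty T with rfl | hne
    · have h0 : vec '' ((∅ : Finset (Fin m)) : Set (Fin m)) = (∅ : Set E) := by simp
      rw [h0]
      exact linearIndependent_empty ℝ E
    · set i0 := T.max' hne with hi0
      have hi0T : i0 ∈ T := T.max'_mem hne
      set T' := T.erase i0 with hT'
      have hsub : T' ⊂ T := Finset.erase_ssubset hi0T
      have hLI' : LinearIndependent ℝ (fun x : (vec '' (T' : Set (Fin m))) => (x : E)) :=
        ihT T' hsub (fun i hi => hT i (Finset.mem_of_mem_erase hi))
      have hset : (T : Set (Fin m)) = insert i0 (T' : Set (Fin m)) := by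
        rw [hT', Finset.coe_erase, Set.insert_diff_singleton]
        symm
        exact Set.insert_eq_self.mpr (by exact_mod_cast hi0T)
      have himg : vec '' (T : Set (Fin m)) = insert (vec i0) (vec '' (T' : Set (Fin m))) := by
        rw [hset, Set.image_insert_eq]
      rw [himg]
      apply LinearIndepOn.id_insert hLI'
      have hmono : vec '' (T' : Set (Fin m)) ⊆ vec '' {j | j < i0 ∧ g j = true} := by
        apply Set.image_mono
        intro j hj
        rw [Finset.coe_erase, Set.mem_diff] at hj
        obtain ⟨hjT, hjne⟩ := hj
        have hjT' : j ∈ T := by exact_mod_cast hjT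
        constructor
        · have hle : j ≤ i0 := T.le_max' j hjT'
          have : j ≠ i0 := by simpa using hjne
          exact lt_of_le_of_ne hle this
        · exact (hT j hjT').1
      intro hmem
      exact (hT i0 hi0T).2 (Submodule.span_mono hmono hmem)

lemma ftN_le_D {m D : ℕ} (vec : Fin m → E) (hinj : Function.Injective vec)
    (hD : Module.finrank ℝ ↥(Submodule.span ℝ (Set.range vec)) ≤ D)
    (g : Fin m → Bool) : ftN vec ⊥ g ≤ D := by
  classical
  set N := Submodule.span ℝ (Set.range vec) with hN
  have : FiniteDimensional ℝ N := FiniteDimensional.span_of_finite ℝ (Set.finite_range vec)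
  set T : Finset (Fin m) := Finset.univ.filter
    (fun i => g i = true ∧ ¬ staleP vec ⊥ g i) with hTdef
  have hftN : ftN vec ⊥ g = T.card := by
    unfold ftN
    rw [hTdef, Finset.card_filter]
  rw [hftN]
  have hprop : ∀ i ∈ T, g i = true ∧ vec i ∉ Submodule.span ℝ (vec '' {j | j < i ∧ g j = true}) := by
    intro i hi
    rw [hTdef, Finset.mem_filter] at hi
    refine ⟨hi.2.1, ?_⟩
    intro hmem
    apply hi.2.2
    unfold staleP
    rw [bot_sup_eq]
    exact hmem
  have hLI := li_of_fresh vec g T hprop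
  set B : Finset E := T.image vec with hB
  have h1 : vec '' (T : Set (Fin m)) = (B : Set E) := by rw [hB, Finset.coe_image]
  rw [h1] at hLI
  have hsubN : ∀ x : ↥(B : Set E), (x : E) ∈ N := by
    rintro ⟨x, hx⟩
    rw [hB, Finset.coe_image] at hx
    obtain ⟨i, -, rfl⟩ := hx
    exact Submodule.subset_span (Set.mem_range_self i)
  have hLIv' : LinearIndependent ℝ (fun x : ↥(B : Set E) => (⟨(x : E), hsubN x⟩ : N)) := by
    apply LinearIndependent.of_comp (N.subtype)
    exact hLI
  have hcard := hLIv'.fintype_card_le_finrank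
  have hfc : Fintype.card ↥(B : Set E) = B.card := by simp
  have hBcard : B.card = T.card := Finset.card_image_of_injective T hinj
  omega

end EventLemmas
section MeasurePart
open MeasureTheory

lemma bern_singleton_true (p : ℝ) : bernoulliMeasure p {true} = ENNReal.ofReal p := by
  unfold bernoulliMeasure
  rw [Measure.add_apply, Measure.smul_apply, Measure.smul_apply]
  rw [Measure.dirac_apply_of_mem (Set.mem_singleton true)]
  rw [Measure.dirac_apply' _ (measurableSet_singleton _)]
  rw [Set.indicator_of_notMem (by simp)]
  simp

lemma bern_singleton_false (p : ℝ) : bernoulliMeasure p {false} = ENNReal.ofReal (1-p) := by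
  unfold bernoulliMeasure
  rw [Measure.add_apply, Measure.smul_apply, Measure.smul_apply]
  rw [Measure.dirac_apply_of_mem (Set.mem_singleton false)]
  rw [Measure.dirac_apply' _ (measurableSet_singleton _)]
  rw [Set.indicator_of_notMem (by simp)]
  simp

lemma pi_bool_singleton_meas {m : ℕ} (g : Fin m → Bool) :
    MeasurableSet ({g} : Set (Fin m → Bool)) := by
  rw [← Set.univ_pi_singleton]
  exact MeasurableSet.univ_pi (fun i => measurableSet_singleton (g i))

lemma pi_bool_singleton (p : ℝ) (hp0 : 0 ≤ p) (hp1 : p ≤ 1) {m : ℕ} (g : Fin m → Bool) :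
    Measure.pi (fun _ : Fin m => bernoulliMeasure p) {g} = ENNReal.ofReal (wt p g) := by
  rw [← Set.univ_pi_singleton]
  rw [Measure.pi_pi]
  unfold wt
  rw [ENNReal.ofReal_prod_of_nonneg (by intro i _; split_ifs <;> linarith)]
  apply Finset.prod_congr rfl
  intro i _
  rcases hgi : g i with _|_
  · rw [bern_singleton_false]
    simp
  · rw [bern_singleton_true]
    simp

open scoped Classical in
lemma pi_bool_apply (p : ℝ) (hp0 : 0 ≤ p) (hp1 : p ≤ 1) {m : ℕ} (S : Set (Fin m → Bool)) :
    Measure.pi (fun _ : Fin m => bernoulliMeasure p) S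
    = ENNReal.ofReal (∑ g ∈ S.toFinset, wt p g) := by
  have hS : S = ⋃ g ∈ S.toFinset, ({g} : Set (Fin m → Bool)) := by
    ext g
    simp [Set.mem_toFinset]
  have h1 : Measure.pi (fun _ : Fin m => bernoulliMeasure p) S
      = ∑ g ∈ S.toFinset, Measure.pi (fun _ : Fin m => bernoulliMeasure p) {g} := by
    conv_lhs => rw [hS]
    apply measure_biUnion_finset
    · intro g _ g' _ hne
      simp only [Set.disjoint_singleton]
      exact hne
    · intro g _
      exact pi_bool_singleton_meas g
  rw [h1, ENNReal.ofReal_sum_of_nonneg]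
  · exact Finset.sum_congr rfl (fun g _ => pi_bool_singleton p hp0 hp1 g)
  · intro g _
    unfold wt
    apply Finset.prod_nonneg
    intro i _
    split_ifs <;> linarith

end MeasurePart

/-- Let `p, ε ∈ (0,1)`, and let `S` be a set of `m` vectors (given by an
injective enumeration `vec : Fin m → E`) with `dim span(S) ≤ D`. Over the random subset `S_p`
of `S` keeping each vector independently with probability `p`,
`P(|{v ∈ S : v ∈ span(S_p)}| < ε·m) ≤ P(X ≤ D)` where `X ~ Bin(m, (1−ε)p)`. -/
theorem stmt_10 {E : Type} [AddCommGroup E] [Module ℝ E]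
    (p ε : ℝ) (hp : p ∈ Set.Ioo (0 : ℝ) 1) (hε : ε ∈ Set.Ioo (0 : ℝ) 1)
    (m D : ℕ) (vec : Fin m → E) (hinj : Function.Injective vec)
    (hD : Module.finrank ℝ ↥(Submodule.span ℝ (Set.range vec)) ≤ D) :
    Measure.pi (fun _ : Fin m => bernoulliMeasure p)
      {f : Fin m → Bool |
        ({i : Fin m | vec i ∈ Submodule.span ℝ (vec '' {j | f j = true})}.ncard : ℝ) < ε * m}
    ≤ ENNReal.ofReal (∑ k ∈ Finset.range (D + 1),
        (m.choose k : ℝ) * ((1 - ε) * p) ^ k * (1 - (1 - ε) * p) ^ (m - k)) := by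
  classical
  obtain ⟨hp0, hp1⟩ := hp
  obtain ⟨hε0, hε1⟩ := hε
  have hRHS : (∑ k ∈ Finset.range (D + 1),
      (m.choose k : ℝ) * ((1 - ε) * p) ^ k * (1 - (1 - ε) * p) ^ (m - k))
      = btail ((1-ε)*p) m D := rfl
  rw [hRHS]
  set S := {f : Fin m → Bool |
      ({i : Fin m | vec i ∈ Submodule.span ℝ (vec '' {j | f j = true})}.ncard : ℝ) < ε * m}
    with hSdef
  rw [pi_bool_apply p hp0.le hp1.le S]
  apply ENNReal.ofReal_le_ofReal
  have hq0 : 0 < (1-ε)*p := by nlinarith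
  have hq1 : (1-ε)*p < 1 := by nlinarith
  have hwt_nonneg : ∀ g : Fin m → Bool, 0 ≤ wt p g := by
    intro g
    unfold wt
    apply Finset.prod_nonneg
    intro i _
    split_ifs <;> linarith
  rcases Nat.eq_zero_or_pos m with rfl | hm
  · -- m = 0 : the event is empty
    have hempty : S.toFinset = ∅ := by
      rw [Finset.eq_empty_iff_forall_notMem]
      intro g hg
      rw [Set.mem_toFinset, hSdef, Set.mem_setOf_eq] at hg
      have : (0:ℝ) ≤ ({i : Fin 0 | vec i ∈ Submodule.span ℝ (vec '' {j | g j = true})}.ncard : ℝ) :=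
        Nat.cast_nonneg _
      simp only [Nat.cast_ofNat, CharP.cast_eq_zero, mul_zero] at hg
      linarith
    rw [hempty, Finset.sum_empty]
    exact btail_nonneg hq0.le hq1.le _ _
  · have hεm_pos : 0 < ε * m := by
      have : (0:ℝ) < (m:ℝ) := by exact_mod_cast hm
      positivity
    set s := ⌈ε * (m:ℝ)⌉₊ - 1 with hs_def
    have hceil_pos : 1 ≤ ⌈ε * (m:ℝ)⌉₊ := by
      rw [Nat.one_le_ceil_iff]
      exact hεm_pos
    have hs : (s:ℝ) < ε * m := by
      have h1 : (⌈ε * (m:ℝ)⌉₊ : ℝ) < ε * m + 1 := Nat.ceil_lt_add_one hεm_pos.le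
      have h2 : (s:ℝ) = (⌈ε * (m:ℝ)⌉₊ : ℝ) - 1 := by
        rw [hs_def]
        rw [Nat.cast_sub hceil_pos]
        norm_num
      linarith
    calc ∑ g ∈ S.toFinset, wt p g
        ≤ SS p vec ⊥ s D := by
          unfold SS
          rw [show (∑ g ∈ S.toFinset, wt p g)
              = ∑ g ∈ S.toFinset,
                (if badN vec ⊥ g ≤ s ∧ ftN vec ⊥ g ≤ D then wt p g else 0) from ?_]
          · apply Finset.sum_le_sum_of_subset_of_nonneg (Finset.subset_univ _)
            intro g _ _
            split_ifs
            · exact hwt_nonneg g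
            · exact le_refl 0
          · apply Finset.sum_congr rfl
            intro g hg
            rw [Set.mem_toFinset, hSdef, Set.mem_setOf_eq] at hg
            rw [if_pos]
            constructor
            · -- badN ≤ s
              have hbd := badN_le_ncard vec g
              have hcard : ({i : Fin m | vec i ∈ Submodule.span ℝ (vec '' {j | g j = true})}.ncard)
                  = (Finset.univ.filter
                    (fun i => vec i ∈ Submodule.span ℝ (vec '' {j | g j = true}))).card := by
                rw [Set.ncard_eq_toFinset_card']
                congr 1
                ext i
                simp
              rw [hcard] at hg
              have hlt : (Finset.univ.filter
                  (fun i => vec i ∈ Submodule.span ℝ (vec '' {j | g j = true}))).card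
                  < ⌈ε * (m:ℝ)⌉₊ := Nat.lt_ceil.mpr hg
              omega
            · exact ftN_le_D vec hinj hD g
      _ ≤ Phi p m s D := SS_le_Phi hp0.le hp1.le m vec ⊥ s D
      _ ≤ btail ((1-ε)*p) m D := Phi_le_btail ⟨hp0,hp1⟩ ⟨hε0,hε1⟩ hs D
end tailLemmas
end

section
/- Let C_* = 2/(1 − log 2). For every c > 1, the function φ_c(t) = 1 − c + t − t·log(t/c) has a smallest nonnegative root a(c), and 0 < a(c) < c. Moreover, φ_{C_*}(C_*/2) = 0, and for every c > 1 one has a(c) < c/2 if and only if c < C_*. -/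
/-- `φ_c(t) = 1 − c + t − t·log(t/c)` (note `Real.log 0 = 0`, so `phi c 0 = 1 - c`). -/
noncomputable def phi (c t : ℝ) : ℝ := 1 - c + t - t * Real.log (t / c)

/-- `a(c)`: the smallest nonnegative root of `φ_c`. -/
noncomputable def rootA (c : ℝ) : ℝ := sInf {t : ℝ | 0 ≤ t ∧ phi c t = 0}

lemma log_two_lt_one : Real.log 2 < 1 := by
  calc Real.log 2 < 0.6931471808 := Real.log_two_lt_d9
  _ < 1 := by norm_num

lemma phi_cont {c : ℝ} (hc : c ≠ 0) : Continuous (phi c) := by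
  have h : phi c = fun t => 1 - c + t - c * ((t / c) * Real.log (t / c)) := by
    funext t
    unfold phi
    field_simp
  rw [h]
  exact (continuous_const.add continuous_id).sub
    (continuous_const.mul (Real.continuous_mul_log.comp (continuous_id.div_const c)))

lemma phi_zero (c : ℝ) : phi c 0 = 1 - c := by simp [phi]

lemma phi_self {c : ℝ} (hc : c ≠ 0) : phi c c = 1 := by
  unfold phi; rw [div_self hc, Real.log_one]; ring

lemma phi_strictMono {c : ℝ} (hc : 0 < c) : StrictMonoOn (phi c) (Set.Icc 0 c) := by
  apply strictMonoOn_of_deriv_pos (convex_Icc 0 c) ((phi_cont hc.ne').continuousOn)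
  intro t ht
  rw [interior_Icc] at ht
  have h1 : HasDerivAt (phi c) (Real.log c - Real.log t) t := by
    have hg : HasDerivAt (fun s : ℝ => 1 - c + s - (s * Real.log s - s * Real.log c))
        (Real.log c - Real.log t) t := by
      have h2 := ((hasDerivAt_const t (1 - c)).add (hasDerivAt_id t)).sub
        ((Real.hasDerivAt_mul_log (ne_of_gt ht.1)).sub
          ((hasDerivAt_id t).mul_const (Real.log c)))
      refine h2.congr_deriv ?_
      ring
    have heq : phi c =ᶠ[nhds t] fun s : ℝ => 1 - c + s - (s * Real.log s - s * Real.log c) := by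
      filter_upwards [Ioi_mem_nhds ht.1] with s hs
      unfold phi
      rw [Real.log_div (ne_of_gt hs) hc.ne']
      ring
    exact hg.congr_of_eventuallyEq heq
  rw [h1.deriv]
  have := Real.log_lt_log ht.1 ht.2
  linarith

lemma phi_root_exists {c : ℝ} (hc : 1 < c) : ∃ x ∈ Set.Ioo 0 c, phi c x = 0 := by
  have hc0 : (0:ℝ) < c := lt_trans zero_lt_one hc
  have h := intermediate_value_Icc hc0.le ((phi_cont hc0.ne').continuousOn)
  have h0 : (0:ℝ) ∈ Set.Icc (phi c 0) (phi c c) := by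
    rw [phi_zero, phi_self hc0.ne']
    constructor <;> linarith
  obtain ⟨x, hx, hx0⟩ := h h0
  refine ⟨x, ⟨?_, ?_⟩, hx0⟩
  · rcases lt_or_eq_of_le hx.1 with h | h
    · exact h
    · exfalso; rw [← h, phi_zero] at hx0; linarith
  · rcases lt_or_eq_of_le hx.2 with h | h
    · exact h
    · exfalso; rw [h, phi_self hc0.ne'] at hx0; linarith

/-- Let `C_* = 2/(1 − log 2)`. For every `c > 1`, `a(c)` is the smallest
nonnegative root of `φ_c`, and `0 < a(c) < c`. Moreover `φ_{C_*}(C_*/2) = 0`, and for `c > 1`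
one has `a(c) < c/2` iff `c < C_*`. -/
theorem stmt_18 :
    (∀ c : ℝ, 1 < c →
      (0 ≤ rootA c ∧ phi c (rootA c) = 0 ∧
        (∀ t : ℝ, 0 ≤ t → phi c t = 0 → rootA c ≤ t)) ∧
      0 < rootA c ∧ rootA c < c) ∧
    phi (2 / (1 - Real.log 2)) ((2 / (1 - Real.log 2)) / 2) = 0 ∧
    (∀ c : ℝ, 1 < c → (rootA c < c / 2 ↔ c < 2 / (1 - Real.log 2))) := by
  have hL : (0:ℝ) < 1 - Real.log 2 := by linarith [log_two_lt_one]
  -- main facts for each c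
  have main : ∀ c : ℝ, 1 < c →
      (0 ≤ rootA c ∧ phi c (rootA c) = 0 ∧
        (∀ t : ℝ, 0 ≤ t → phi c t = 0 → rootA c ≤ t)) ∧ 0 < rootA c ∧ rootA c < c := by
    intro c hc
    have hc0 : (0:ℝ) < c := lt_trans zero_lt_one hc
    set S := {t : ℝ | 0 ≤ t ∧ phi c t = 0} with hS
    have hclosed : IsClosed S := by
      have : S = Set.Ici 0 ∩ phi c ⁻¹' {0} := by
        ext t; simp [hS, Set.mem_Ici]
      rw [this]
      exact isClosed_Ici.inter ((isClosed_singleton).preimage (phi_cont hc0.ne'))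
    obtain ⟨x, hxI, hx0⟩ := phi_root_exists hc
    have hne : S.Nonempty := ⟨x, hxI.1.le, hx0⟩
    have hbdd : BddBelow S := ⟨0, fun t ht => ht.1⟩
    have hmem : rootA c ∈ S := hclosed.csInf_mem hne hbdd
    have hle : ∀ t : ℝ, 0 ≤ t → phi c t = 0 → rootA c ≤ t := fun t ht0 ht =>
      csInf_le hbdd ⟨ht0, ht⟩
    have hpos : 0 < rootA c := by
      rcases lt_or_eq_of_le hmem.1 with h | h
      · exact h
      · exfalso; have := hmem.2; rw [← h, phi_zero] at this; linarith
    have hlt : rootA c < c := lt_of_le_of_lt (hle x hxI.1.le hx0) hxI.2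
    exact ⟨⟨hmem.1, hmem.2, hle⟩, hpos, hlt⟩
  refine ⟨main, ?_, ?_⟩
  · -- phi C* (C*/2) = 0
    have hC : (2:ℝ) / (1 - Real.log 2) ≠ 0 := by positivity
    unfold phi
    have harg : ((2 / (1 - Real.log 2)) / 2) / (2 / (1 - Real.log 2)) = (2:ℝ)⁻¹ := by
      field_simp
    rw [harg, Real.log_inv]
    field_simp
    ring
  · intro c hc
    have hc0 : (0:ℝ) < c := lt_trans zero_lt_one hc
    obtain ⟨⟨ha0, haroot, _⟩, hapos, halt⟩ := main c hc
    have haI : rootA c ∈ Set.Icc 0 c := ⟨ha0, halt.le⟩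
    have hhalfI : c / 2 ∈ Set.Icc 0 c := ⟨by linarith, by linarith⟩
    have hiff := (phi_strictMono hc0).lt_iff_lt haI hhalfI
    rw [← hiff, haroot]
    have hval : phi c (c / 2) = 1 - c + c / 2 - c / 2 * (-Real.log 2) := by
      unfold phi
      rw [show (c / 2) / c = (2:ℝ)⁻¹ by field_simp, Real.log_inv]
    rw [hval, lt_div_iff₀ hL]
    constructor <;> intro h <;> nlinarith
end
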